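/- arXiv:1710.03514 — 8 statements merged into one kernel-verified Lean document; each statement's English description precedes it below -/
import Mathlib

section
/- Let λ be a symplectic partition of 2m. Define P^+(λ) as the set of odd indices j ≥ 1 such that λ_j is even and λ_{j-1} > λ_j (with the convention λ_0 = ∞), and P^-(λ) as the set of even indices j ≥ 2 such that λ_j is even and λ_j > λ_{j+1}. Then |P^+(λ)| = |P^-(λ)| + 1, and writing P^+(λ) = {p⁺_1 < ... < p⁺_{a+1}} and P^-(λ) = {p⁻_1 < ... < p⁻_a}, the elements interleave: p⁺_1 < p⁻_1 < p⁺_2 < p⁻_2 < ... < p⁺_a < p⁻_a < p⁺_{a+1}. -/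
open Classical

noncomputable section

/-- A partition: weakly decreasing on indices `j ≥ 1` (parts are `l 1 ≥ l 2 ≥ ...`). -/
def IsPartition (l : ℕ → ℕ) : Prop := ∀ j, 1 ≤ j → l (j + 1) ≤ l j

/-- The parts vanish eventually (finitely many nonzero parts). -/
def EventuallyZero (l : ℕ → ℕ) : Prop := ∃ N, ∀ j, N ≤ j → l j = 0

/-- Multiplicity of `i` as a part of `l`. -/
def mult (l : ℕ → ℕ) (i : ℕ) : ℕ := Nat.card {j : ℕ | 1 ≤ j ∧ l j = i}

/-- The sum of the parts of `l`. -/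
def psum (l : ℕ → ℕ) : ℕ := ∑ᶠ j : ℕ, l (j + 1)

/-- Symplectic: every odd part occurs with even multiplicity. -/
def IsSymplectic (l : ℕ → ℕ) : Prop := ∀ i, Odd i → Even (mult l i)

/-- Orthogonal: every even positive part occurs with even multiplicity. -/
def IsOrthogonal (l : ℕ → ℕ) : Prop := ∀ i, 0 < i → Even i → Even (mult l i)

/-- Special: `l (2j-1)` and `l (2j)` have the same parity for all `j ≥ 1`. -/
def IsSpecial (l : ℕ → ℕ) : Prop := ∀ j, 1 ≤ j → l (2 * j - 1) % 2 = l (2 * j) % 2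

/-- `P^+(λ)`: odd `j` with `λ_j` even and `λ_{j-1} > λ_j` (convention `λ_0 = ∞`). -/
def Pplus (l : ℕ → ℕ) : Set ℕ := {j | Odd j ∧ Even (l j) ∧ (j = 1 ∨ l (j - 1) > l j)}

/-- `P^-(λ)`: even `j ≥ 2` with `λ_j` even and `λ_j > λ_{j+1}`. -/
def Pminus (l : ℕ → ℕ) : Set ℕ := {j | 2 ≤ j ∧ Even j ∧ Even (l j) ∧ l j > l (j + 1)}

/-- `Q^+(λ)`: even `j ≥ 2` with `λ_j` odd and `λ_{j-1} > λ_j`. -/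
def Qplus (l : ℕ → ℕ) : Set ℕ := {j | 2 ≤ j ∧ Even j ∧ Odd (l j) ∧ l (j - 1) > l j}

/-- `Q^-(λ)`: odd `j ≥ 1` with `λ_j` odd and `λ_j > λ_{j+1}`. -/
def Qminus (l : ℕ → ℕ) : Set ℕ := {j | Odd j ∧ Odd (l j) ∧ l j > l (j + 1)}

/-- Orthogonal version of `P^+`: odd `j` with `λ_j` odd and `λ_{j-1} > λ_j` (`λ_0 = ∞`). -/
def PplusO (l : ℕ → ℕ) : Set ℕ := {j | Odd j ∧ Odd (l j) ∧ (j = 1 ∨ l (j - 1) > l j)}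

/-- Orthogonal version of `P^-`: even `j ≥ 2` with `λ_j` odd and `λ_j > λ_{j+1}`. -/
def PminusO (l : ℕ → ℕ) : Set ℕ := {j | 2 ≤ j ∧ Even j ∧ Odd (l j) ∧ l j > l (j + 1)}

/-- The sequence `s(λ)`: `1` on `Q^+`, `-1` on `Q^-`, `0` elsewhere. -/
def sSeq (l : ℕ → ℕ) (j : ℕ) : ℤ :=
  if j ∈ Qplus l then 1 else if j ∈ Qminus l then -1 else 0

/-- The sequence `ζ(λ)`: `1` on `P^+`, `-1` on `P^-`, `0` elsewhere. -/
def zSeq (l : ℕ → ℕ) (j : ℕ) : ℤ :=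
  if j ∈ Pplus l then 1 else if j ∈ Pminus l then -1 else 0

/-- Orthogonal `ζ(λ)`: `1` on `PplusO`, `-1` on `PminusO`, `0` elsewhere. -/
def zSeqO (l : ℕ → ℕ) (j : ℕ) : ℤ :=
  if j ∈ PplusO l then 1 else if j ∈ PminusO l then -1 else 0

/-- `sp(λ) = λ + s(λ)` (termwise, truncated to ℕ). -/
def spPart (l : ℕ → ℕ) (j : ℕ) : ℕ := ((l j : ℤ) + sSeq l j).toNat

/-- Dominance order on partitions. -/
def Dom (l m : ℕ → ℕ) : Prop :=
  ∀ k, ∑ j ∈ Finset.range k, l (j + 1) ≤ ∑ j ∈ Finset.range k, m (j + 1)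

/-- `j_min(i)`: smallest index `j ≥ 1` with `l j = i`. -/
def jminPart (l : ℕ → ℕ) (i : ℕ) : ℕ := sInf {j | 1 ≤ j ∧ l j = i}

/-- `j_max(i)`: largest index `j ≥ 1` with `l j = i`. -/
def jmaxPart (l : ℕ → ℕ) (i : ℕ) : ℕ := sSup {j | 1 ≤ j ∧ l j = i}

/-- `iSeq 1 > iSeq 2 > ... > iSeq t` enumerates the even positive parts of odd
multiplicity of the symplectic partition `l`, completed by a final `0` if their
number is odd (so that `t` is even). -/
def MarkedSeq (l : ℕ → ℕ) (iSeq : ℕ → ℕ) (t : ℕ) : Prop :=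
  Even t ∧
  (∀ h h', 1 ≤ h → h < h' → h' ≤ t → iSeq h' < iSeq h) ∧
  (∀ h, 1 ≤ h → h ≤ t → Even (iSeq h)) ∧
  (∀ h, 1 ≤ h → h ≤ t → iSeq h ≠ 0 → Odd (mult l (iSeq h))) ∧
  (∀ i, 0 < i → Even i → Odd (mult l i) → ∃ h, 1 ≤ h ∧ h ≤ t ∧ iSeq h = i)

/-- Orthogonal analogue: `iSeq` enumerates the odd parts of odd multiplicity. -/
def MarkedSeqO (l : ℕ → ℕ) (iSeq : ℕ → ℕ) (t : ℕ) : Prop :=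
  Even t ∧
  (∀ h h', 1 ≤ h → h < h' → h' ≤ t → iSeq h' < iSeq h) ∧
  (∀ h, 1 ≤ h → h ≤ t → Odd (iSeq h)) ∧
  (∀ h, 1 ≤ h → h ≤ t → Odd (mult l (iSeq h))) ∧
  (∀ i, Odd i → Odd (mult l i) → ∃ h, 1 ≤ h ∧ h ≤ t ∧ iSeq h = i)

/-- `i` lies in the range `[i_{2h}, i_{2h-1}]` for some `h`. -/
def InRange (iSeq : ℕ → ℕ) (t : ℕ) (i : ℕ) : Prop :=
  ∃ h, 1 ≤ h ∧ 2 * h ≤ t ∧ iSeq (2 * h) ≤ i ∧ i ≤ iSeq (2 * h - 1)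

/-- Intervals of a (special symplectic) partition `l`, relative to the marked
sequence `iSeq` of length `t`. -/
def IsItv (l : ℕ → ℕ) (iSeq : ℕ → ℕ) (t : ℕ) (Δ : Set ℕ) : Prop :=
  (∃ h, 1 ≤ h ∧ 2 * h ≤ t ∧
      Δ = {i | (i = 0 ∨ 0 < mult l i) ∧ iSeq (2 * h) ≤ i ∧ i ≤ iSeq (2 * h - 1)}) ∨
  (∃ i, Even i ∧ (i = 0 ∨ 0 < mult l i) ∧ ¬ InRange iSeq t i ∧ Δ = {i})

/-- Intervals of a (special orthogonal, even) partition `l`. -/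
def IsItvO (l : ℕ → ℕ) (iSeq : ℕ → ℕ) (t : ℕ) (Δ : Set ℕ) : Prop :=
  (∃ h, 1 ≤ h ∧ 2 * h ≤ t ∧
      Δ = {i | 0 < mult l i ∧ iSeq (2 * h) ≤ i ∧ i ≤ iSeq (2 * h - 1)}) ∨
  (∃ i, Odd i ∧ 0 < mult l i ∧ ¬ InRange iSeq t i ∧ Δ = {i})

/-- `J(Δ)`: the set of indices `j ≥ 1` whose part lies in `Δ`. -/
def idxSet (l : ℕ → ℕ) (Δ : Set ℕ) : Set ℕ := {j | 1 ≤ j ∧ l j ∈ Δ}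

/-- Good parity at index `j`: `λ_{1,j}` even and `λ_{2,j}` odd. -/
def GoodIdx (l₁ l₂ : ℕ → ℕ) (j : ℕ) : Prop := Even (l₁ j) ∧ Odd (l₂ j)

/-- `J^+`: odd `j` of good parity with a strict decrease at `j-1 → j` for some `d`. -/
def Jplus (l₁ l₂ : ℕ → ℕ) : Set ℕ :=
  {j | Odd j ∧ GoodIdx l₁ l₂ j ∧ (j = 1 ∨ l₁ (j - 1) > l₁ j ∨ l₂ (j - 1) > l₂ j)}

/-- `J^-`: even `j` of good parity with a strict decrease at `j → j+1` for some `d`. -/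
def Jminus (l₁ l₂ : ℕ → ℕ) : Set ℕ :=
  {j | 2 ≤ j ∧ Even j ∧ GoodIdx l₁ l₂ j ∧ (l₁ j > l₁ (j + 1) ∨ l₂ j > l₂ (j + 1))}

/-- The sequence `ξ`: `1` on `J^+`, `-1` on `J^-`, `0` elsewhere. -/
def xiSeq (l₁ l₂ : ℕ → ℕ) (j : ℕ) : ℤ :=
  if j ∈ Jplus l₁ l₂ then 1 else if j ∈ Jminus l₁ l₂ then -1 else 0

/-- The endoscopic induction `λ = λ₁ + λ₂ + ξ` (termwise, truncated to ℕ). -/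
def indPart (l₁ l₂ : ℕ → ℕ) (j : ℕ) : ℕ := ((l₁ j : ℤ) + (l₂ j : ℤ) + xiSeq l₁ l₂ j).toNat

namespace InterlaceAux

variable {l : ℕ → ℕ}

lemma anti (hpart : IsPartition l) {j : ℕ} (hj : 1 ≤ j) :
    ∀ j', j ≤ j' → l j' ≤ l j := by
  intro j' hjj'
  induction j' , hjj' using Nat.le_induction with
  | base => exact le_refl _
  | succ n hn ih => exact le_trans (hpart n (le_trans hj hn)) ih

/-- The invariant: partial count difference between `P^+` and `P^-` up to `k`. -/
def phi (l : ℕ → ℕ) (k : ℕ) : ℕ :=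
  if k = 0 then 0
  else if l k % 2 = 0 then
    (if k % 2 = 1 then 1 else if l (k + 1) = l k then 1 else 0)
  else if (sInf {i | 1 ≤ i ∧ l i = l k}) % 2 = 0 then 1 else 0

lemma phi_le_one (l : ℕ → ℕ) (k : ℕ) : phi l k ≤ 1 := by
  unfold phi; split_ifs <;> omega

lemma phi_even_odd {k : ℕ} (hk : k % 2 = 1) (hl : l k % 2 = 0) : phi l k = 1 := by
  have h0 : k ≠ 0 := by omega
  simp [phi, h0, hl, hk]

lemma phi_even_even {k : ℕ} (hk : k % 2 = 0) (h0 : k ≠ 0) (hl : l k % 2 = 0) :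
    phi l k = if l (k + 1) = l k then 1 else 0 := by
  simp [phi, h0, hl, hk]

lemma phi_odd {k : ℕ} (h0 : k ≠ 0) (hl : l k % 2 = 1) :
    phi l k = if (sInf {i | 1 ≤ i ∧ l i = l k}) % 2 = 0 then 1 else 0 := by
  simp [phi, h0, hl]

/-- If the value at `j` strictly drops from `j-1` (or `j = 1`), then `j` is the
minimal index achieving this value. -/
lemma sInf_eq_self (hpart : IsPartition l) {j : ℕ} (hj : 1 ≤ j)
    (hdrop : j = 1 ∨ l j < l (j - 1)) :
    sInf {i | 1 ≤ i ∧ l i = l j} = j := by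
  have hjS : j ∈ {i | 1 ≤ i ∧ l i = l j} := ⟨hj, rfl⟩
  have h1 : sInf {i | 1 ≤ i ∧ l i = l j} ≤ j := Nat.sInf_le hjS
  have h2 : sInf {i | 1 ≤ i ∧ l i = l j} ∈ {i | 1 ≤ i ∧ l i = l j} :=
    Nat.sInf_mem ⟨j, hjS⟩
  obtain ⟨ha1, hav⟩ := h2
  rcases hdrop with h | h
  · omega
  · by_contra hne
    have hlt : sInf {i | 1 ≤ i ∧ l i = l j} ≤ j - 1 := by omega
    have := anti hpart ha1 (j - 1) hlt
    omega

/-- Symplectic parity: at the end of a block of odd value, the start of the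
block has opposite parity to the end. -/
lemma block_parity (hpart : IsPartition l) (hsymp : IsSymplectic l) {b : ℕ}
    (hb : 1 ≤ b) (hodd : l b % 2 = 1) (hnext : l (b + 1) ≠ l b) :
    sInf {i | 1 ≤ i ∧ l i = l b} % 2 ≠ b % 2 := by
  have hbS : b ∈ {i | 1 ≤ i ∧ l i = l b} := ⟨hb, rfl⟩
  have hne : Set.Nonempty {i | 1 ≤ i ∧ l i = l b} := ⟨b, hbS⟩
  set a := sInf {i | 1 ≤ i ∧ l i = l b} with ha
  have haS : a ∈ {i | 1 ≤ i ∧ l i = l b} := Nat.sInf_mem hne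
  obtain ⟨ha1, hav⟩ := haS
  have hab : a ≤ b := Nat.sInf_le hbS
  have hSeq : {i : ℕ | 1 ≤ i ∧ l i = l b} = Set.Icc a b := by
    ext i
    constructor
    · rintro ⟨hi1, hiv⟩
      refine ⟨Nat.sInf_le ⟨hi1, hiv⟩, ?_⟩
      by_contra hbi
      push_neg at hbi
      have hib1 : b + 1 ≤ i := by omega
      have h1 : l i ≤ l (b + 1) := anti hpart (by omega) i hib1
      have h2 : l (b + 1) ≤ l b := hpart b hb
      omega
    · rintro ⟨hai, hib⟩
      have hi1 : 1 ≤ i := le_trans ha1 hai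
      have h2 : l i ≤ l a := anti hpart ha1 i hai
      have h3 : l b ≤ l i := anti hpart hi1 b hib
      exact ⟨hi1, by omega⟩
  have hcard : mult l (l b) = b + 1 - a := by
    rw [mult, hSeq, Nat.card_coe_set_eq, ← Finset.coe_Icc, Set.ncard_coe_finset,
      Nat.card_Icc]
  have heven : Even (mult l (l b)) := hsymp (l b) (Nat.odd_iff.2 hodd)
  rw [hcard, Nat.even_iff] at heven
  omega

/-- End-of-odd-block value of `phi`. -/
lemma phi_odd_end (hpart : IsPartition l) (hsymp : IsSymplectic l) {k : ℕ}
    (hk : 1 ≤ k) (hl : l k % 2 = 1) (hnext : l (k + 1) ≠ l k) :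
    phi l k = if k % 2 = 1 then 1 else 0 := by
  rw [phi_odd (by omega) hl]
  have := block_parity hpart hsymp hk hl hnext
  have h2 : sInf {i | 1 ≤ i ∧ l i = l k} % 2 < 2 := Nat.mod_lt _ (by omega)
  have h3 : k % 2 < 2 := Nat.mod_lt _ (by omega)
  split_ifs with h4 h5 h5 <;> omega

/-- Start-of-odd-block value of `phi`. -/
lemma phi_odd_drop (hpart : IsPartition l) {j : ℕ} (hj : 1 ≤ j)
    (hl : l j % 2 = 1) (hdrop : j = 1 ∨ l j < l (j - 1)) :
    phi l j = if j % 2 = 0 then 1 else 0 := by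
  rw [phi_odd (by omega) hl, sInf_eq_self hpart hj hdrop]

lemma phi_odd_cont {k : ℕ} (hk : 1 ≤ k) (hl : l k % 2 = 1)
    (heq : l (k + 1) = l k) : phi l (k + 1) = phi l k := by
  have h1 : l (k + 1) % 2 = 1 := by omega
  rw [phi_odd (by omega) hl, phi_odd (by omega) h1, heq]

lemma mem_Pplus_iff (k : ℕ) :
    (k + 1) ∈ Pplus l ↔
      ((k + 1) % 2 = 1 ∧ l (k + 1) % 2 = 0 ∧ (k + 1 = 1 ∨ l (k + 1) < l k)) := by
  simp only [Pplus, Set.mem_setOf_eq, Nat.odd_iff, Nat.even_iff, gt_iff_lt,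
    Nat.add_sub_cancel]

lemma mem_Pminus_iff (k : ℕ) :
    (k + 1) ∈ Pminus l ↔
      (2 ≤ k + 1 ∧ (k + 1) % 2 = 0 ∧ l (k + 1) % 2 = 0 ∧ l (k + 2) < l (k + 1)) := by
  simp only [Pminus, Set.mem_setOf_eq, Nat.even_iff, gt_iff_lt]

/-- The key step identity. -/
lemma step (hpart : IsPartition l) (hsymp : IsSymplectic l) (k : ℕ) :
    phi l k + (if (k + 1) ∈ Pplus l then 1 else 0)
      = (if (k + 1) ∈ Pminus l then 1 else 0) + phi l (k + 1) := by
  have hA := mem_Pplus_iff (l := l) k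
  have hB := mem_Pminus_iff (l := l) k
  rcases Nat.eq_zero_or_pos k with hk0 | hk1
  · -- j = 1
    subst hk0
    have hphi0 : phi l 0 = 0 := by simp [phi]
    have hBf : ¬ (0 + 1) ∈ Pminus l := by
      intro h
      have := hB.1 h
      omega
    rw [hphi0, if_neg hBf]
    rcases Nat.even_or_odd (l (0 + 1)) with he | ho
    · rw [Nat.even_iff] at he
      have hAt : (0 + 1) ∈ Pplus l := hA.2 ⟨by norm_num, he, Or.inl rfl⟩
      rw [if_pos hAt, phi_even_odd (by norm_num) he]
    · rw [Nat.odd_iff] at ho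
      have hAf : ¬ (0 + 1) ∈ Pplus l := by
        intro h
        have := hA.1 h
        omega
      rw [if_neg hAf, phi_odd_drop hpart (by norm_num) ho (Or.inl rfl)]
      norm_num
  · -- j = k + 1, k ≥ 1
    have hmono : l (k + 1) ≤ l k := hpart k hk1
    have hmono2 : l (k + 2) ≤ l (k + 1) := hpart (k + 1) (by omega)
    rcases Nat.even_or_odd (k + 1) with hje | hjo
    · -- j even, so k odd
      rw [Nat.even_iff] at hje
      have hkodd : k % 2 = 1 := by omega
      have hAf : ¬ (k + 1) ∈ Pplus l := by rw [hA]; omega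
      rw [if_neg hAf]
      rcases Nat.even_or_odd (l (k + 1)) with hlje | hljo
      · -- l j even
        rw [Nat.even_iff] at hlje
        have hphij : phi l (k + 1) = if l (k + 2) = l (k + 1) then 1 else 0 :=
          phi_even_even hje (by omega) hlje
        have hphik : phi l k = 1 := by
          rcases Nat.even_or_odd (l k) with he | ho
          · exact phi_even_odd hkodd (Nat.even_iff.1 he)
          · have ho' := Nat.odd_iff.1 ho
            have hne : l (k + 1) ≠ l k := by omega
            rw [phi_odd_end hpart hsymp hk1 ho' hne, if_pos hkodd]
        rcases eq_or_ne (l (k + 2)) (l (k + 1)) with heq | hne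
        · have hBf : ¬ (k + 1) ∈ Pminus l := by rw [hB]; omega
          rw [if_neg hBf, hphij, if_pos heq, hphik]
        · have hBt : (k + 1) ∈ Pminus l := by rw [hB]; exact ⟨by omega, hje, hlje, by omega⟩
          rw [if_pos hBt, hphij, if_neg hne, hphik]
      · -- l j odd
        rw [Nat.odd_iff] at hljo
        have hBf : ¬ (k + 1) ∈ Pminus l := by rw [hB]; omega
        rw [if_neg hBf]
        rcases eq_or_ne (l (k + 1)) (l k) with heq | hne
        · have hlko : l k % 2 = 1 := by omega
          rw [phi_odd_cont hk1 hlko heq]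
          omega
        · have hdrop : k + 1 = 1 ∨ l (k + 1) < l (k + 1 - 1) := by
            right; simpa using (by omega : l (k + 1) < l k)
          have hphij : phi l (k + 1) = 1 := by
            rw [phi_odd_drop hpart (by omega) hljo hdrop, if_pos hje]
          have hphik : phi l k = 1 := by
            rcases Nat.even_or_odd (l k) with he | ho
            · exact phi_even_odd hkodd (Nat.even_iff.1 he)
            · rw [phi_odd_end hpart hsymp hk1 (Nat.odd_iff.1 ho) hne, if_pos hkodd]
          rw [hphij, hphik]
    · -- j odd, so k even (and k ≥ 2)
      rw [Nat.odd_iff] at hjo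
      have hkev : k % 2 = 0 := by omega
      have hBf : ¬ (k + 1) ∈ Pminus l := by rw [hB]; omega
      rw [if_neg hBf]
      rcases Nat.even_or_odd (l (k + 1)) with hlje | hljo
      · -- l j even
        rw [Nat.even_iff] at hlje
        have hphij : phi l (k + 1) = 1 := phi_even_odd hjo hlje
        rcases Nat.even_or_odd (l k) with he | ho
        · have he' := Nat.even_iff.1 he
          have hphik : phi l k = if l (k + 1) = l k then 1 else 0 :=
            phi_even_even hkev (by omega) he'
          rcases eq_or_ne (l (k + 1)) (l k) with heq | hne
          · have hAf : ¬ (k + 1) ∈ Pplus l := by rw [hA]; omega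
            rw [if_neg hAf, hphij, hphik, if_pos heq]
          · have hAt : (k + 1) ∈ Pplus l := by rw [hA]; exact ⟨hjo, hlje, by omega⟩
            rw [if_pos hAt, hphij, hphik, if_neg hne]
        · have ho' := Nat.odd_iff.1 ho
          have hne : l (k + 1) ≠ l k := by omega
          have hAt : (k + 1) ∈ Pplus l := by rw [hA]; exact ⟨hjo, hlje, by omega⟩
          have hphik : phi l k = 0 := by
            rw [phi_odd_end hpart hsymp hk1 ho' hne, if_neg (by omega)]
          rw [if_pos hAt, hphij, hphik]
      · -- l j odd
        rw [Nat.odd_iff] at hljo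
        have hAf : ¬ (k + 1) ∈ Pplus l := by rw [hA]; omega
        rw [if_neg hAf]
        rcases eq_or_ne (l (k + 1)) (l k) with heq | hne
        · have hlko : l k % 2 = 1 := by omega
          rw [phi_odd_cont hk1 hlko heq]
          omega
        · have hdrop : k + 1 = 1 ∨ l (k + 1) < l (k + 1 - 1) := by
            right; simpa using (by omega : l (k + 1) < l k)
          have hphij : phi l (k + 1) = 0 := by
            rw [phi_odd_drop hpart (by omega) hljo hdrop, if_neg (by omega)]
          have hphik : phi l k = 0 := by
            rcases Nat.even_or_odd (l k) with he | ho
            · rw [phi_even_even hkev (by omega) (Nat.even_iff.1 he), if_neg hne]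
            · rw [phi_odd_end hpart hsymp hk1 (Nat.odd_iff.1 ho) hne,
                if_neg (by omega)]
          rw [hphij, hphik]

/-- The fundamental counting identity: up to each index, the number of
elements of `P^+` exceeds that of `P^-` by exactly `phi`. -/
lemma key (hpart : IsPartition l) (hsymp : IsSymplectic l) :
    ∀ k, Nat.count (· ∈ Pplus l) (k + 1) = Nat.count (· ∈ Pminus l) (k + 1) + phi l k := by
  intro k
  induction k with
  | zero =>
      have h0A : ¬ ((0 : ℕ) ∈ Pplus l) := by
        simp [Pplus, Nat.odd_iff]
      have h0B : ¬ ((0 : ℕ) ∈ Pminus l) := by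
        simp [Pminus]
      simp [Nat.count_one, h0A, h0B, phi]
  | succ n ih =>
      have eA : Nat.count (· ∈ Pplus l) (n + 1 + 1)
          = Nat.count (· ∈ Pplus l) (n + 1) + (if (n + 1) ∈ Pplus l then 1 else 0) :=
        Nat.count_succ _ _
      have eB : Nat.count (· ∈ Pminus l) (n + 1 + 1)
          = Nat.count (· ∈ Pminus l) (n + 1) + (if (n + 1) ∈ Pminus l then 1 else 0) :=
        Nat.count_succ _ _
      have hstep := step hpart hsymp n
      rw [eA, eB]
      split_ifs at hstep ⊢ <;> omega

end InterlaceAux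

/-- `|P^+(λ)| = |P^-(λ)| + 1` and the elements interleave
`p⁺_1 < p⁻_1 < p⁺_2 < ... < p⁻_a < p⁺_{a+1}`. -/
theorem Pplus_Pminus_interlace (m : ℕ) (l : ℕ → ℕ) (hpart : IsPartition l)
    (hzero : EventuallyZero l) (hsum : psum l = 2 * m) (hsymp : IsSymplectic l) :
    ∃ (a : ℕ) (pp pm : ℕ → ℕ),
      Pplus l = pp '' Set.Iio (a + 1) ∧
      Pminus l = pm '' Set.Iio a ∧
      ∀ i, i < a → pp i < pm i ∧ pm i < pp (i + 1) := by
  classical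
  clear hsum
  obtain ⟨N₀, hN₀⟩ := hzero
  set N := N₀ + 1 with hNdef
  have hNz : ∀ j, N ≤ j → l j = 0 := fun j hj => hN₀ j (by omega)
  have key := InterlaceAux.key hpart hsymp
  -- bounds on the two sets
  have hbA : ∀ x ∈ Pplus l, x < N + 1 := by
    rintro x ⟨hodd, hev, h⟩
    rw [Nat.odd_iff] at hodd
    rcases h with h1 | h2
    · omega
    · by_contra hx
      push_neg at hx
      have h0 : l (x - 1) = 0 := hNz _ (by omega)
      omega
  have hbB : ∀ x ∈ Pminus l, x < N + 1 := by
    rintro x ⟨h2, _, _, hlt⟩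
    by_contra hx
    push_neg at hx
    have h0 : l x = 0 := hNz _ (by omega)
    omega
  have hfA : (Pplus l).Finite := (Set.finite_Iio (N + 1)).subset fun x hx => hbA x hx
  have hfB : (Pminus l).Finite := (Set.finite_Iio (N + 1)).subset fun x hx => hbB x hx
  set a := Nat.count (· ∈ Pminus l) (N + 1) with hadef
  have hphiN : InterlaceAux.phi l N = 1 := by
    have h1 : l N = 0 := hNz N le_rfl
    have h2 : l (N + 1) = 0 := hNz _ (by omega)
    have h0 : N ≠ 0 := by omega
    simp [InterlaceAux.phi, h0, h1, h2]
  have hcountB : ∀ hf : (Set.ofPred (· ∈ Pminus l)).Finite, hf.toFinset.card = a := by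
    intro hf
    have hfin : hf.toFinset = (Finset.range (N + 1)).filter (· ∈ Pminus l) := by
      ext x
      simp only [Set.Finite.mem_toFinset, Finset.mem_filter, Finset.mem_range,
        Set.mem_setOf_eq]
      exact ⟨fun h => ⟨hbB x h, h⟩, fun h => h.2⟩
    rw [hfin, hadef, Nat.count_eq_card_filter_range]
  have hcountA : ∀ hf : (Set.ofPred (· ∈ Pplus l)).Finite, hf.toFinset.card = a + 1 := by
    intro hf
    have hfin : hf.toFinset = (Finset.range (N + 1)).filter (· ∈ Pplus l) := by
      ext x
      simp only [Set.Finite.mem_toFinset, Finset.mem_filter, Finset.mem_range,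
        Set.mem_setOf_eq]
      exact ⟨fun h => ⟨hbA x h, h⟩, fun h => h.2⟩
    rw [hfin, ← Nat.count_eq_card_filter_range]
    rw [key N, hphiN, hadef]
  refine ⟨a, Nat.nth (· ∈ Pplus l), Nat.nth (· ∈ Pminus l), ?_, ?_, ?_⟩
  · ext x
    simp only [Set.mem_image, Set.mem_Iio]
    constructor
    · intro hx
      refine ⟨Nat.count (· ∈ Pplus l) x, ?_, Nat.nth_count (p := (· ∈ Pplus l)) hx⟩
      have hc := Nat.count_lt_card (p := (· ∈ Pplus l)) hfA hx
      rw [hcountA hfA] at hc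
      exact hc
    · rintro ⟨i, hi, rfl⟩
      exact Nat.nth_mem_of_lt_card (p := (· ∈ Pplus l)) hfA (by rw [hcountA hfA]; omega)
  · ext x
    simp only [Set.mem_image, Set.mem_Iio]
    constructor
    · intro hx
      refine ⟨Nat.count (· ∈ Pminus l) x, ?_, Nat.nth_count (p := (· ∈ Pminus l)) hx⟩
      have hc := Nat.count_lt_card (p := (· ∈ Pminus l)) hfB hx
      rw [hcountB hfB] at hc
      exact hc
    · rintro ⟨i, hi, rfl⟩
      exact Nat.nth_mem_of_lt_card (p := (· ∈ Pminus l)) hfB (by rw [hcountB hfB]; omega)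
  · intro i hi
    constructor
    · -- pp i < pm i
      set x := Nat.nth (· ∈ Pminus l) i with hxdef
      have hxmem : x ∈ Pminus l :=
        Nat.nth_mem_of_lt_card (p := (· ∈ Pminus l)) hfB (by rw [hcountB hfB]; omega)
      have hcnt : Nat.count (· ∈ Pminus l) x = i :=
        Nat.count_nth_of_lt_card_finite (p := (· ∈ Pminus l)) hfB (by rw [hcountB hfB]; omega)
      have hcnt1 : Nat.count (· ∈ Pminus l) (x + 1) = i + 1 := by
        have e : Nat.count (· ∈ Pminus l) (x + 1)
            = Nat.count (· ∈ Pminus l) x + (if x ∈ Pminus l then 1 else 0) :=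
          Nat.count_succ _ _
        rw [e, hcnt, if_pos hxmem]
      have hAc : i < Nat.count (· ∈ Pplus l) (x + 1) := by
        have hk := key x
        omega
      have hlt := Nat.nth_lt_of_lt_count (p := (· ∈ Pplus l)) hAc
      have hmemA : Nat.nth (· ∈ Pplus l) i ∈ Pplus l :=
        Nat.nth_mem_of_lt_card (p := (· ∈ Pplus l)) hfA (by rw [hcountA hfA]; omega)
      have hne : Nat.nth (· ∈ Pplus l) i ≠ x := by
        intro heq
        have h1 := hmemA.1
        have h2 := hxmem.2.1
        rw [heq, Nat.odd_iff] at h1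
        rw [Nat.even_iff] at h2
        omega
      omega
    · -- pm i < pp (i + 1)
      set y := Nat.nth (· ∈ Pplus l) (i + 1) with hydef
      have hymem : y ∈ Pplus l :=
        Nat.nth_mem_of_lt_card (p := (· ∈ Pplus l)) hfA (by rw [hcountA hfA]; omega)
      have hcnt : Nat.count (· ∈ Pplus l) y = i + 1 :=
        Nat.count_nth_of_lt_card_finite (p := (· ∈ Pplus l)) hfA (by rw [hcountA hfA]; omega)
      have hcnt1 : Nat.count (· ∈ Pplus l) (y + 1) = i + 2 := by
        have e : Nat.count (· ∈ Pplus l) (y + 1)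
            = Nat.count (· ∈ Pplus l) y + (if y ∈ Pplus l then 1 else 0) :=
          Nat.count_succ _ _
        rw [e, hcnt, if_pos hymem]
      have hBc : i < Nat.count (· ∈ Pminus l) (y + 1) := by
        have hk := key y
        have hp := InterlaceAux.phi_le_one l y
        omega
      have hlt := Nat.nth_lt_of_lt_count (p := (· ∈ Pminus l)) hBc
      have hmemB : Nat.nth (· ∈ Pminus l) i ∈ Pminus l :=
        Nat.nth_mem_of_lt_card (p := (· ∈ Pminus l)) hfB (by rw [hcountB hfB]; omega)
      have hne : Nat.nth (· ∈ Pminus l) i ≠ y := by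
        intro heq
        have h1 := hmemB.2.1
        have h2 := hymem.1
        rw [heq] at h1
        rw [Nat.even_iff] at h1
        rw [Nat.odd_iff] at h2
        omega
      omega
end
end

section
/- Let λ be a symplectic partition of 2m. Define Q^+(λ) as the set of even indices j ≥ 2 such that λ_j is odd and λ_{j-1} > λ_j, and Q^-(λ) as the set of odd indices j ≥ 1 such that λ_j is odd and λ_j > λ_{j+1}. Then |Q^+(λ)| = |Q^-(λ)|, and writing Q^+(λ) = {q⁺_1 < ... < q⁺_b}, Q^-(λ) = {q⁻_1 < ... < q⁻_b}, the elements interleave: q⁺_1 < q⁻_1 < q⁺_2 < q⁻_2 < ... < q⁺_b < q⁻_b. -/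
open Classical

noncomputable section

lemma mono_parts {l : ℕ → ℕ} (hpart : IsPartition l) {a b : ℕ} (ha : 1 ≤ a) (hab : a ≤ b) :
    l b ≤ l a := by
  induction b, hab using Nat.le_induction with
  | base => exact le_refl _
  | succ n hn ih => exact le_trans (hpart n (le_trans ha hn)) ih

/-- Core facts about the block of indices carrying a given odd part value. -/
lemma block_facts {l : ℕ → ℕ} (hpart : IsPartition l) (hzero : EventuallyZero l)
    (hsymp : IsSymplectic l) {j : ℕ} (hj : 1 ≤ j) (hodd : Odd (l j)) :
    1 ≤ jminPart l (l j) ∧ jminPart l (l j) ≤ jmaxPart l (l j) ∧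
    l (jminPart l (l j)) = l j ∧ l (jmaxPart l (l j)) = l j ∧
    (∀ k, 1 ≤ k → l k = l j → jminPart l (l j) ≤ k ∧ k ≤ jmaxPart l (l j)) ∧
    jminPart l (l j) % 2 ≠ jmaxPart l (l j) % 2 := by
  obtain ⟨N, hN⟩ := hzero
  set v := l j with hv
  set S : Set ℕ := {k | 1 ≤ k ∧ l k = v} with hS
  have hvpos : 0 < v := hodd.pos
  have hne : S.Nonempty := ⟨j, hj, rfl⟩
  have hbdd : BddAbove S := by
    refine ⟨N, fun k hk => ?_⟩
    by_contra h
    push_neg at h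
    have := hN k (le_of_lt h)
    have := hk.2
    omega
  have hAmem : jminPart l v ∈ S := Nat.sInf_mem hne
  have hBmem : jmaxPart l v ∈ S := Nat.sSup_mem hne hbdd
  set A := jminPart l v
  set B := jmaxPart l v
  have hA1 : 1 ≤ A := hAmem.1
  have hAB : A ≤ B := Nat.sInf_le hBmem
  have hlA : l A = v := hAmem.2
  have hlB : l B = v := hBmem.2
  have hmem : ∀ k, 1 ≤ k → l k = v → A ≤ k ∧ k ≤ B := fun k hk1 hk2 =>
    ⟨Nat.sInf_le ⟨hk1, hk2⟩, le_csSup hbdd ⟨hk1, hk2⟩⟩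
  refine ⟨hA1, hAB, hlA, hlB, hmem, ?_⟩
  -- The set S is exactly Icc A B, of even cardinality
  have hSeq : S = Set.Icc A B := by
    ext k
    constructor
    · intro hk
      exact ⟨Nat.sInf_le hk, le_csSup hbdd hk⟩
    · rintro ⟨h1, h2⟩
      have hk1 : 1 ≤ k := le_trans hA1 h1
      have hle : l k ≤ v := hlA ▸ mono_parts hpart hA1 h1
      have hge : v ≤ l k := hlB ▸ mono_parts hpart hk1 h2
      exact ⟨hk1, le_antisymm hle hge⟩
  have hmult : mult l v = B + 1 - A := by
    rw [mult]
    have : {k : ℕ | 1 ≤ k ∧ l k = v} = S := rfl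
    rw [this, hSeq, ← Finset.coe_Icc, Nat.card_coe_set_eq, Set.ncard_coe_finset, Nat.card_Icc]
  have heven : Even (mult l v) := hsymp v hodd
  rw [hmult, Nat.even_iff] at heven
  omega

/-- The pairing map from `Qplus` to `Qminus`, with its key properties. -/
lemma qplus_to_qminus {l : ℕ → ℕ} (hpart : IsPartition l) (hzero : EventuallyZero l)
    (hsymp : IsSymplectic l) {j : ℕ} (hj : j ∈ Qplus l) :
    jmaxPart l (l j) ∈ Qminus l ∧ j < jmaxPart l (l j) := by
  obtain ⟨hj2, hje, hodd, hdec⟩ := hj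
  have hj1 : 1 ≤ j := by omega
  obtain ⟨hA1, hAB, hlA, hlB, hmem, hpar⟩ := block_facts hpart hzero hsymp hj1 hodd
  set A := jminPart l (l j)
  set B := jmaxPart l (l j)
  -- j = A
  have hjA : j = A := by
    have h1 : A ≤ j := (hmem j hj1 rfl).1
    rcases eq_or_lt_of_le h1 with h | h
    · omega
    · exfalso
      have hA' : A ≤ j - 1 := by omega
      have : l (j - 1) ≤ l A := mono_parts hpart hA1 hA'
      omega
  have hAeven : A % 2 = 0 := by
    rw [← hjA]; rw [Nat.even_iff] at hje; exact hje
  have hBodd : Odd B := by rw [Nat.odd_iff]; omega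
  have hB1 : 1 ≤ B := le_trans hA1 hAB
  have hBdec : l B > l (B + 1) := by
    have hle : l (B + 1) ≤ l B := hpart B hB1
    rcases eq_or_lt_of_le hle with h | h
    · exfalso
      have : A ≤ B + 1 ∧ B + 1 ≤ B := hmem (B + 1) (by omega) (by rw [h, hlB])
      omega
    · exact h
  have hAB' : j < B := by omega
  exact ⟨⟨hBodd, hlB ▸ hodd, hBdec⟩, hAB'⟩

lemma qminus_from_qplus {l : ℕ → ℕ} (hpart : IsPartition l) (hzero : EventuallyZero l)
    (hsymp : IsSymplectic l) {k : ℕ} (hk : k ∈ Qminus l) :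
    ∃ j ∈ Qplus l, jmaxPart l (l j) = k := by
  obtain ⟨hko, hlodd, hdec⟩ := hk
  have hk1 : 1 ≤ k := hko.pos
  obtain ⟨hA1, hAB, hlA, hlB, hmem, hpar⟩ := block_facts hpart hzero hsymp hk1 hlodd
  set A := jminPart l (l k)
  set B := jmaxPart l (l k)
  -- k = B
  have hkB : k = B := by
    have h1 : k ≤ B := (hmem k hk1 rfl).2
    rcases eq_or_lt_of_le h1 with h | h
    · exact h
    · exfalso
      have : l B ≤ l (k + 1) := mono_parts hpart (by omega) (by omega)
      omega
  have hBodd : B % 2 = 1 := by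
    rw [← hkB]; rw [Nat.odd_iff] at hko; exact hko
  have hAeven : Even A := by rw [Nat.even_iff]; omega
  have hA2 : 2 ≤ A := by
    rcases Nat.even_iff.mp hAeven with h; omega
  have hAdec : l (A - 1) > l A := by
    have hle : l A ≤ l (A - 1) := by
      have := hpart (A - 1) (by omega)
      have hA : A - 1 + 1 = A := by omega
      rwa [hA] at this
    rcases eq_or_lt_of_le hle with h | h
    · exfalso
      have : A ≤ A - 1 ∧ A - 1 ≤ B := hmem (A - 1) (by omega) (by rw [← h, hlA])
      omega
    · exact h
  refine ⟨A, ⟨hA2, hAeven, hlA ▸ hlodd, hAdec⟩, ?_⟩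
  rw [hlA]
  exact hkB.symm

lemma qplus_separation {l : ℕ → ℕ} (hpart : IsPartition l) (hzero : EventuallyZero l)
    (hsymp : IsSymplectic l) {j j' : ℕ} (hj : j ∈ Qplus l) (hj' : j' ∈ Qplus l)
    (hlt : j < j') : jmaxPart l (l j) < j' := by
  obtain ⟨hj2, hje, hodd, hdec⟩ := hj
  obtain ⟨hj2', hje', hodd', hdec'⟩ := hj'
  have hj1 : 1 ≤ j := by omega
  obtain ⟨hA1, hAB, hlA, hlB, hmem, hpar⟩ := block_facts hpart hzero hsymp hj1 hodd
  set B := jmaxPart l (l j)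
  -- l j' < l j
  have hlval : l j' < l j := by
    have h1 : l (j' - 1) ≤ l j := mono_parts hpart hj1 (by omega)
    omega
  by_contra h
  push_neg at h
  have : l B ≤ l j' := mono_parts hpart (by omega) h
  omega

/-- `|Q^+(λ)| = |Q^-(λ)|` and the elements interleave
`q⁺_1 < q⁻_1 < q⁺_2 < ... < q⁺_b < q⁻_b`. -/
theorem Qplus_Qminus_interlace (m : ℕ) (l : ℕ → ℕ) (hpart : IsPartition l)
    (hzero : EventuallyZero l) (hsum : psum l = 2 * m) (hsymp : IsSymplectic l) :
    ∃ (b : ℕ) (qp qm : ℕ → ℕ),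
      Qplus l = qp '' Set.Iio b ∧
      Qminus l = qm '' Set.Iio b ∧
      (∀ i, i < b → qp i < qm i) ∧
      (∀ i, i + 1 < b → qm i < qp (i + 1)) := by
  obtain ⟨N, hN⟩ := hzero
  have hzero' : EventuallyZero l := ⟨N, hN⟩
  -- Qplus is finite
  have hfin : (Qplus l).Finite := by
    apply Set.Finite.subset (Set.finite_Iio N)
    intro j hj
    obtain ⟨_, _, hodd, _⟩ := hj
    simp only [Set.mem_Iio]
    by_contra h
    push_neg at h
    have h0 := hN j h
    rw [Nat.odd_iff, h0] at hodd
    omega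
  set s := hfin.toFinset with hs
  set b := s.card with hb
  set e := s.orderIsoOfFin rfl with he
  set qp : ℕ → ℕ := fun i => if h : i < b then (e ⟨i, h⟩ : ℕ) else 0 with hqp
  set qm : ℕ → ℕ := fun i => jmaxPart l (l (qp i)) with hqm
  have hqp_mem : ∀ i (h : i < b), qp i ∈ Qplus l := by
    intro i h
    have : qp i = (e ⟨i, h⟩ : ℕ) := by rw [hqp]; simp [h]
    rw [this]
    have h2 := (e ⟨i, h⟩).2
    exact hfin.mem_toFinset.mp h2
  have hqp_mono : ∀ i i' (hi : i < b) (hi' : i' < b), i < i' → qp i < qp i' := by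
    intro i i' hi hi' hlt
    have h1 : qp i = (e ⟨i, hi⟩ : ℕ) := by rw [hqp]; simp [hi]
    have h2 : qp i' = (e ⟨i', hi'⟩ : ℕ) := by rw [hqp]; simp [hi']
    rw [h1, h2]
    have : e ⟨i, hi⟩ < e ⟨i', hi'⟩ := by
      rw [OrderIso.lt_iff_lt]
      exact hlt
    exact_mod_cast this
  have hqp_img : Qplus l = qp '' Set.Iio b := by
    ext x
    constructor
    · intro hx
      have hxs : x ∈ s := hfin.mem_toFinset.mpr hx
      obtain ⟨i, hi⟩ := e.surjective ⟨x, hxs⟩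
      refine ⟨i.1, i.2, ?_⟩
      rw [hqp]
      simp only [i.2, dif_pos]
      rw [dif_pos (show (i : ℕ) < b from i.2), show (⟨i.1, i.2⟩ : Fin b) = i from rfl, hi]
    · rintro ⟨i, hi, rfl⟩
      exact hqp_mem i hi
  refine ⟨b, qp, qm, hqp_img, ?_, ?_, ?_⟩
  · -- Qminus = qm '' Iio b
    ext k
    constructor
    · intro hk
      obtain ⟨j, hjQ, hjk⟩ := qminus_from_qplus hpart hzero' hsymp hk
      rw [hqp_img] at hjQ
      obtain ⟨i, hi, rfl⟩ := hjQ
      exact ⟨i, hi, hjk⟩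
    · rintro ⟨i, hi, rfl⟩
      exact (qplus_to_qminus hpart hzero' hsymp (hqp_mem i hi)).1
  · intro i hi
    exact (qplus_to_qminus hpart hzero' hsymp (hqp_mem i hi)).2
  · intro i hi
    exact qplus_separation hpart hzero' hsymp (hqp_mem i (by omega)) (hqp_mem (i + 1) hi)
      (hqp_mono i (i + 1) (by omega) hi (by omega))
end
end

section
/- Let λ be a symplectic partition of 2n. Define the sequence s(λ) by s(λ)_j = 1 if j ∈ Q^+(λ), s(λ)_j = -1 if j ∈ Q^-(λ), and s(λ)_j = 0 otherwise. Then the sequence ν = λ + s(λ) (termwise sum) is a partition, i.e. ν_j ≥ ν_{j+1} ≥ 0 for all j ≥ 1. -/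
open Classical

noncomputable section

/-- `ν = λ + s(λ)` is a partition: its terms are nonnegative and
weakly decreasing. -/
theorem lambda_add_s_isPartition (n : ℕ) (l : ℕ → ℕ) (hpart : IsPartition l)
    (hzero : EventuallyZero l) (hsum : psum l = 2 * n) (hsymp : IsSymplectic l) :
    ∀ j, 1 ≤ j →
      0 ≤ (l j : ℤ) + sSeq l j ∧
      (l (j + 1) : ℤ) + sSeq l (j + 1) ≤ (l j : ℤ) + sSeq l j := by
  intro j hj
  have hmono := hpart j hj
  have key : ∀ k, (sSeq l k = 1 ∧ k ∈ Qplus l) ∨ (sSeq l k = -1 ∧ k ∈ Qminus l) ∨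
      sSeq l k = 0 := by
    intro k
    unfold sSeq
    split_ifs with h1 h2 <;> simp_all
  constructor
  · rcases key j with ⟨hs, -⟩ | ⟨hs, hm⟩ | hs
    · omega
    · obtain ⟨-, -, hgt⟩ := hm
      omega
    · omega
  · rcases key j with ⟨hs, hm⟩ | ⟨hs, hm⟩ | hs <;>
      rcases key (j+1) with ⟨hs', hm'⟩ | ⟨hs', hm'⟩ | hs'
    · omega
    · omega
    · omega
    · -- s j = -1, s (j+1) = 1
      obtain ⟨-, ⟨a, ha⟩, -⟩ := hm
      obtain ⟨-, -, ⟨b, hb⟩, hgt⟩ := hm'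
      simp only [Nat.add_sub_cancel] at hgt
      omega
    · omega
    · -- s j = -1, s (j+1) = 0
      obtain ⟨-, -, hgt⟩ := hm
      omega
    · -- s j = 0, s (j+1) = 1
      obtain ⟨-, -, -, hgt⟩ := hm'
      simp only [Nat.add_sub_cancel] at hgt
      omega
    · omega
    · omega
end
end

section
/- Let λ be a symplectic partition of 2n and let ν = λ + s(λ). Then ν is a special symplectic partition of 2n. -/
open Classical

noncomputable section

section Aux

variable {l : ℕ → ℕ}

lemma mono_l (hpart : IsPartition l) {j k : ℕ} (hj : 1 ≤ j) (hjk : j ≤ k) : l k ≤ l j := by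
  have key : ∀ d, l (j + d) ≤ l j := by
    intro d
    induction d with
    | zero => exact le_rfl
    | succ m ih => exact le_trans (hpart (j + m) (by omega)) ih
  have : k = j + (k - j) := by omega
  rw [this]
  exact key _

lemma qplus_not_qminus {j : ℕ} (h : j ∈ Qplus l) : j ∉ Qminus l := by
  intro h'
  have h1 := h.2.1
  have h2 := h'.1
  rw [Nat.even_iff] at h1; rw [Nat.odd_iff] at h2; omega

lemma sSeq_qplus {j : ℕ} (h : j ∈ Qplus l) : sSeq l j = 1 := by simp [sSeq, h]

lemma sSeq_qminus {j : ℕ} (h : j ∈ Qminus l) : sSeq l j = -1 := by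
  have h2 : j ∉ Qplus l := fun h' => qplus_not_qminus h' h
  simp [sSeq, h, h2]

lemma sSeq_zero {j : ℕ} (h1 : j ∉ Qplus l) (h2 : j ∉ Qminus l) : sSeq l j = 0 := by
  simp [sSeq, h1, h2]

lemma qplus_of_sSeq {j : ℕ} (h : sSeq l j = 1) : j ∈ Qplus l := by
  unfold sSeq at h; split_ifs at h with h1 h2
  · exact h1
  · exact absurd h (by norm_num)

lemma qminus_of_sSeq {j : ℕ} (h : sSeq l j = -1) : j ∈ Qminus l := by
  unfold sSeq at h; split_ifs at h with h1 h2
  exact h2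

lemma sSeq_trichot (l : ℕ → ℕ) (j : ℕ) : sSeq l j = 1 ∨ sSeq l j = -1 ∨ sSeq l j = 0 := by
  unfold sSeq; split_ifs <;> tauto

lemma sSeq_nonneg_aux (l : ℕ → ℕ) (j : ℕ) : 0 ≤ (l j : ℤ) + sSeq l j := by
  rcases sSeq_trichot l j with h | h | h
  · rw [h]; positivity
  · rw [h]
    have ho := (qminus_of_sSeq h).2.1
    rw [Nat.odd_iff] at ho
    omega
  · rw [h]; positivity

lemma spPart_cast (l : ℕ → ℕ) (j : ℕ) : (spPart l j : ℤ) = (l j : ℤ) + sSeq l j := by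
  unfold spPart; rw [Int.toNat_of_nonneg (sSeq_nonneg_aux l j)]

lemma sp_of_zero {j : ℕ} (h : sSeq l j = 0) : spPart l j = l j := by
  have := spPart_cast l j; rw [h] at this; exact_mod_cast this

lemma sp_of_one {j : ℕ} (h : sSeq l j = 1) : spPart l j = l j + 1 := by
  have := spPart_cast l j; rw [h] at this; exact_mod_cast this

lemma sp_of_neg {j : ℕ} (h : sSeq l j = -1) : spPart l j = l j - 1 ∧ 1 ≤ l j := by
  have hc := spPart_cast l j; rw [h] at hc
  have ho := (qminus_of_sSeq h).2.1
  rw [Nat.odd_iff] at ho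
  constructor
  · omega
  · omega

/-- Block facts for a value `i > 0` present in `l`. -/
lemma block (hpart : IsPartition l) (hzero : EventuallyZero l) {i : ℕ} (hpos : 0 < i)
    (hne : ∃ j, 1 ≤ j ∧ l j = i) :
    1 ≤ jminPart l i ∧ jminPart l i ≤ jmaxPart l i ∧
    l (jminPart l i) = i ∧ l (jmaxPart l i) = i ∧
    (∀ j, (1 ≤ j ∧ l j = i) ↔ (jminPart l i ≤ j ∧ j ≤ jmaxPart l i)) ∧
    (2 ≤ jminPart l i → i < l (jminPart l i - 1)) ∧
    l (jmaxPart l i + 1) < i := by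
  obtain ⟨N, hN⟩ := hzero
  set S : Set ℕ := {j | 1 ≤ j ∧ l j = i} with hS
  have hSne : S.Nonempty := by obtain ⟨j, hj⟩ := hne; exact ⟨j, hj⟩
  have hbdd : BddAbove S := by
    refine ⟨N, fun j hj => ?_⟩
    by_contra h
    push_neg at h
    have := hN j (le_of_lt h)
    have := hj.2
    omega
  have hamem : jminPart l i ∈ S := Nat.sInf_mem hSne
  have hbmem : jmaxPart l i ∈ S := Nat.sSup_mem hSne hbdd
  set a := jminPart l i
  set b := jmaxPart l i
  have hiff : ∀ j, (1 ≤ j ∧ l j = i) ↔ (a ≤ j ∧ j ≤ b) := by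
    intro j
    constructor
    · intro hj; exact ⟨Nat.sInf_le hj, le_csSup hbdd hj⟩
    · rintro ⟨h1, h2⟩
      have h1' : 1 ≤ j := le_trans hamem.1 h1
      have m1 : l j ≤ l a := mono_l hpart hamem.1 h1
      have m2 : l b ≤ l j := mono_l hpart h1' h2
      refine ⟨h1', ?_⟩
      rw [hamem.2] at m1; rw [hbmem.2] at m2; omega
  refine ⟨hamem.1, Nat.sInf_le hbmem, hamem.2, hbmem.2, hiff, ?_, ?_⟩
  · intro ha2
    have hnot : ¬ (1 ≤ a - 1 ∧ l (a - 1) = i) := by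
      intro hc
      have := (hiff (a - 1)).mp hc
      omega
    have hm : l a ≤ l (a - 1) := by
      have := mono_l hpart (j := a - 1) (k := a) (by omega) (by omega)
      exact this
    rw [hamem.2] at hm
    omega
  · have hnot : ¬ (1 ≤ b + 1 ∧ l (b + 1) = i) := by
      intro hc
      have := (hiff (b + 1)).mp hc
      omega
    have hm : l (b + 1) ≤ l b := hpart b hbmem.1
    rw [hbmem.2] at hm
    omega

lemma sSeq_of_zero_part {j : ℕ} (h : l j = 0) : sSeq l j = 0 := by
  apply sSeq_zero
  · intro hQ
    have := hQ.2.2.1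
    rw [h] at this
    simp [Nat.odd_iff] at this
  · intro hQ
    have := hQ.2.1
    rw [h] at this
    simp [Nat.odd_iff] at this

lemma mult_eq (hpart : IsPartition l) (hzero : EventuallyZero l) {i : ℕ} (hpos : 0 < i)
    (hne : ∃ j, 1 ≤ j ∧ l j = i) :
    mult l i = jmaxPart l i + 1 - jminPart l i := by
  obtain ⟨ha1, hab, hla, hlb, hiff, hleft, hright⟩ := block hpart hzero hpos hne
  have hset : {j : ℕ | 1 ≤ j ∧ l j = i} = ↑(Finset.Icc (jminPart l i) (jmaxPart l i)) := by
    ext j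
    simp only [Set.mem_setOf_eq, Finset.coe_Icc, Set.mem_Icc]
    exact hiff j
  unfold mult
  rw [hset, Nat.card_coe_set_eq, Set.ncard_coe_finset, Nat.card_Icc]

lemma block_parity (hpart : IsPartition l) (hzero : EventuallyZero l) (hsymp : IsSymplectic l)
    {i : ℕ} (hodd : Odd i) (hne : ∃ j, 1 ≤ j ∧ l j = i) :
    jminPart l i % 2 ≠ jmaxPart l i % 2 := by
  have hpos : 0 < i := by rw [Nat.odd_iff] at hodd; omega
  have hmult := mult_eq hpart hzero hpos hne
  have heven := hsymp i hodd
  rw [hmult, Nat.even_iff] at heven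
  obtain ⟨ha1, hab, _, _, _, _, _⟩ := block hpart hzero hpos hne
  omega

lemma qplus_iff_min (hpart : IsPartition l) (hzero : EventuallyZero l) {j : ℕ}
    (h2 : 2 ≤ j) (he : Even j) (ho : Odd (l j)) :
    j ∈ Qplus l ↔ j = jminPart l (l j) := by
  have hpos : 0 < l j := by rw [Nat.odd_iff] at ho; omega
  have hne : ∃ k, 1 ≤ k ∧ l k = l j := ⟨j, by omega, rfl⟩
  obtain ⟨ha1, hab, hla, hlb, hiff, hleft, hright⟩ := block hpart hzero hpos hne
  constructor
  · intro h
    have hj := (hiff j).mp ⟨by omega, rfl⟩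
    by_contra hne'
    have haj : jminPart l (l j) < j := lt_of_le_of_ne hj.1 (fun hh => hne' hh.symm)
    have hmem : 1 ≤ j - 1 ∧ l (j - 1) = l j := (hiff (j - 1)).mpr ⟨by omega, by omega⟩
    have hd := h.2.2.2
    omega
  · intro h
    refine ⟨h2, he, ho, ?_⟩
    have hgt := hleft (by omega)
    rw [← h] at hgt
    omega

lemma qminus_iff_max (hpart : IsPartition l) (hzero : EventuallyZero l) {j : ℕ}
    (h1 : 1 ≤ j) (hoj : Odd j) (ho : Odd (l j)) :
    j ∈ Qminus l ↔ j = jmaxPart l (l j) := by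
  have hpos : 0 < l j := by rw [Nat.odd_iff] at ho; omega
  have hne : ∃ k, 1 ≤ k ∧ l k = l j := ⟨j, h1, rfl⟩
  obtain ⟨ha1, hab, hla, hlb, hiff, hleft, hright⟩ := block hpart hzero hpos hne
  constructor
  · intro h
    have hj := (hiff j).mp ⟨h1, rfl⟩
    by_contra hne'
    have hjb : j < jmaxPart l (l j) := lt_of_le_of_ne hj.2 hne'
    have hmem : 1 ≤ j + 1 ∧ l (j + 1) = l j := (hiff (j + 1)).mpr ⟨by omega, by omega⟩
    have hd := h.2.2
    omega
  · intro h
    refine ⟨hoj, ho, ?_⟩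
    rw [← h] at hright
    omega

lemma step_le (hpart : IsPartition l) {j : ℕ} (hj : 1 ≤ j) :
    (l (j + 1) : ℤ) + sSeq l (j + 1) ≤ (l j : ℤ) + sSeq l j := by
  have hle : l (j + 1) ≤ l j := hpart j hj
  by_cases hq : (j + 1) ∈ Qplus l
  · have hd : l (j + 1) < l j := by
      have := hq.2.2.2
      simpa using this
    rw [sSeq_qplus hq]
    by_cases hm : j ∈ Qminus l
    · rw [sSeq_qminus hm]
      have o1 := hm.2.1
      have o2 := hq.2.2.1
      rw [Nat.odd_iff] at o1 o2
      push_cast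
      omega
    · by_cases hp : j ∈ Qplus l
      · rw [sSeq_qplus hp]; push_cast; omega
      · rw [sSeq_zero hp hm]; push_cast; omega
  · have h2 : sSeq l (j + 1) ≤ 0 := by
      by_cases hq2 : (j + 1) ∈ Qminus l
      · rw [sSeq_qminus hq2]; norm_num
      · rw [sSeq_zero hq hq2]
    by_cases hp : j ∈ Qplus l
    · rw [sSeq_qplus hp]; push_cast; omega
    · by_cases hm : j ∈ Qminus l
      · have hd : l (j + 1) < l j := hm.2.2
        rw [sSeq_qminus hm]; push_cast; omega
      · rw [sSeq_zero hp hm]; push_cast; omega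

lemma qcard (hpart : IsPartition l) (hzero : EventuallyZero l) (hsymp : IsSymplectic l)
    (N : ℕ) (hN : ∀ j, N ≤ j → l j = 0) :
    ((Finset.Icc 1 N).filter (· ∈ Qplus l)).card
      = ((Finset.Icc 1 N).filter (· ∈ Qminus l)).card := by
  apply Finset.card_bij (fun j _ => jmaxPart l (l j))
  · intro j hj
    rw [Finset.mem_filter, Finset.mem_Icc] at hj
    obtain ⟨hjI, hjQ⟩ := hj
    have ho := hjQ.2.2.1
    have hpos : 0 < l j := by rw [Nat.odd_iff] at ho; omega
    have hne : ∃ k, 1 ≤ k ∧ l k = l j := ⟨j, by omega, rfl⟩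
    obtain ⟨ha1, hab, hla, hlb, hiff, hleft, hright⟩ := block hpart hzero hpos hne
    have hmin : j = jminPart l (l j) := (qplus_iff_min hpart hzero hjQ.1 hjQ.2.1 ho).mp hjQ
    have hpar := block_parity hpart hzero hsymp ho hne
    have hje := hjQ.2.1
    rw [Nat.even_iff] at hje
    have hbodd : Odd (jmaxPart l (l j)) := by rw [Nat.odd_iff]; omega
    have hbQ : jmaxPart l (l j) ∈ Qminus l := by
      apply (qminus_iff_max hpart hzero (by omega) hbodd (by rw [hlb]; exact ho)).mpr
      rw [hlb]
    refine Finset.mem_filter.mpr ⟨Finset.mem_Icc.mpr ⟨by omega, ?_⟩, hbQ⟩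
    by_contra hb
    push_neg at hb
    have := hN (jmaxPart l (l j)) (by omega)
    omega
  · intro j1 h1 j2 h2 heq
    rw [Finset.mem_filter, Finset.mem_Icc] at h1 h2
    have ho1 := h1.2.2.2.1
    have ho2 := h2.2.2.2.1
    have hpos1 : 0 < l j1 := by rw [Nat.odd_iff] at ho1; omega
    have hpos2 : 0 < l j2 := by rw [Nat.odd_iff] at ho2; omega
    obtain ⟨_, _, _, hlb1, _, _, _⟩ := block hpart hzero hpos1 ⟨j1, by omega, rfl⟩
    obtain ⟨_, _, _, hlb2, _, _, _⟩ := block hpart hzero hpos2 ⟨j2, by omega, rfl⟩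
    have hval : l j1 = l j2 := by rw [← hlb1, heq, hlb2]
    have m1 : j1 = jminPart l (l j1) := (qplus_iff_min hpart hzero h1.2.1 h1.2.2.1 ho1).mp h1.2
    have m2 : j2 = jminPart l (l j2) := (qplus_iff_min hpart hzero h2.2.1 h2.2.2.1 ho2).mp h2.2
    rw [m1, m2, hval]
  · intro k hk
    rw [Finset.mem_filter, Finset.mem_Icc] at hk
    obtain ⟨⟨hk1, hkN⟩, hkQ⟩ := hk
    have hok := hkQ.1
    have holk := hkQ.2.1
    have hpos : 0 < l k := by rw [Nat.odd_iff] at holk; omega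
    have hne : ∃ j, 1 ≤ j ∧ l j = l k := ⟨k, hk1, rfl⟩
    obtain ⟨ha1, hab, hla, hlb, hiff, hleft, hright⟩ := block hpart hzero hpos hne
    have hmax : k = jmaxPart l (l k) := (qminus_iff_max hpart hzero hk1 hok holk).mp hkQ
    have hpar := block_parity hpart hzero hsymp holk hne
    have hko := hok
    rw [Nat.odd_iff] at hko
    have hae : jminPart l (l k) % 2 = 0 := by omega
    have haQ : jminPart l (l k) ∈ Qplus l := by
      apply (qplus_iff_min hpart hzero (by omega) (by rw [Nat.even_iff]; omega)
        (by rw [hla]; exact holk)).mpr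
      rw [hla]
    refine ⟨jminPart l (l k),
      Finset.mem_filter.mpr ⟨Finset.mem_Icc.mpr ⟨ha1, by omega⟩, haQ⟩, ?_⟩
    rw [hla, ← hmax]

lemma symp_sp (hpart : IsPartition l) (hzero : EventuallyZero l) (hsymp : IsSymplectic l) :
    IsSymplectic (spPart l) := by
  intro i hi
  have hi2 := hi
  rw [Nat.odd_iff] at hi2
  have key : ∀ j, spPart l j = i ↔ (l j = i ∧ sSeq l j = 0) := by
    intro j
    constructor
    · intro h
      rcases sSeq_trichot l j with hs | hs | hs
      · have hsp := sp_of_one hs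
        have ho := (qplus_of_sSeq hs).2.2.1
        rw [Nat.odd_iff] at ho
        omega
      · obtain ⟨hsp, hp1⟩ := sp_of_neg hs
        have ho := (qminus_of_sSeq hs).2.1
        rw [Nat.odd_iff] at ho
        omega
      · have hsp := sp_of_zero hs
        exact ⟨by omega, hs⟩
    · rintro ⟨h1, h2⟩
      rw [sp_of_zero h2, h1]
  by_cases hne : ∃ j, 1 ≤ j ∧ l j = i
  · have hpos : 0 < i := by omega
    obtain ⟨ha1, hab, hla, hlb, hiff, hleft, hright⟩ := block hpart hzero hpos hne
    have hpar := block_parity hpart hzero hsymp hi hne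
    have hmult := mult_eq hpart hzero hpos hne
    have hevenm := hsymp i hi
    rw [hmult, Nat.even_iff] at hevenm
    set a := jminPart l i with haa
    set b := jmaxPart l i with hbb
    rcases Nat.even_or_odd a with hae | hao
    · rw [Nat.even_iff] at hae
      have sa : sSeq l a = 1 := by
        apply sSeq_qplus
        refine ⟨by omega, by rw [Nat.even_iff]; omega, by rw [hla]; exact hi, ?_⟩
        rw [hla]
        exact hleft (by omega)
      have sb : sSeq l b = -1 := by
        apply sSeq_qminus
        refine ⟨by rw [Nat.odd_iff]; omega, by rw [hlb]; exact hi, ?_⟩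
        rw [hlb]
        exact hright
      have hset : {j : ℕ | 1 ≤ j ∧ spPart l j = i} = ↑(Finset.Icc (a + 1) (b - 1)) := by
        ext j
        simp only [Set.mem_setOf_eq, Finset.coe_Icc, Set.mem_Icc]
        constructor
        · rintro ⟨hj1, hj2⟩
          rw [key j] at hj2
          obtain ⟨hl, hs⟩ := hj2
          have hj := (hiff j).mp ⟨hj1, hl⟩
          have hna : j ≠ a := by intro h; rw [h, sa] at hs; norm_num at hs
          have hnb : j ≠ b := by intro h; rw [h, sb] at hs; norm_num at hs
          omega
        · rintro ⟨hj1, hj2⟩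
          have hjS : 1 ≤ j ∧ l j = i := (hiff j).mpr ⟨by omega, by omega⟩
          refine ⟨hjS.1, (key j).mpr ⟨hjS.2, sSeq_zero ?_ ?_⟩⟩
          · intro hQ
            have hd := hQ.2.2.2
            have hmem : 1 ≤ j - 1 ∧ l (j - 1) = i := (hiff (j - 1)).mpr ⟨by omega, by omega⟩
            have := hjS.2
            omega
          · intro hQ
            have hd := hQ.2.2
            have hmem : 1 ≤ j + 1 ∧ l (j + 1) = i := (hiff (j + 1)).mpr ⟨by omega, by omega⟩
            have := hjS.2
            omega
      unfold mult
      rw [hset, Nat.card_coe_set_eq, Set.ncard_coe_finset, Nat.card_Icc, Nat.even_iff]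
      omega
    · rw [Nat.odd_iff] at hao
      have hset : {j : ℕ | 1 ≤ j ∧ spPart l j = i} = ↑(Finset.Icc a b) := by
        ext j
        simp only [Set.mem_setOf_eq, Finset.coe_Icc, Set.mem_Icc]
        constructor
        · rintro ⟨hj1, hj2⟩
          rw [key j] at hj2
          exact (hiff j).mp ⟨hj1, hj2.1⟩
        · rintro ⟨hj1, hj2⟩
          have hjS : 1 ≤ j ∧ l j = i := (hiff j).mpr ⟨hj1, hj2⟩
          refine ⟨hjS.1, (key j).mpr ⟨hjS.2, sSeq_zero ?_ ?_⟩⟩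
          · intro hQ
            have hd := hQ.2.2.2
            have hje := hQ.2.1
            rw [Nat.even_iff] at hje
            have hj2' := hQ.1
            by_cases hja : j = a
            · omega
            · have hmem : 1 ≤ j - 1 ∧ l (j - 1) = i := (hiff (j - 1)).mpr ⟨by omega, by omega⟩
              have := hjS.2
              omega
          · intro hQ
            have hd := hQ.2.2
            have hjo := hQ.1
            rw [Nat.odd_iff] at hjo
            by_cases hjb : j = b
            · omega
            · have hmem : 1 ≤ j + 1 ∧ l (j + 1) = i := (hiff (j + 1)).mpr ⟨by omega, by omega⟩
              have := hjS.2
              omega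
      unfold mult
      rw [hset, Nat.card_coe_set_eq, Set.ncard_coe_finset, Nat.card_Icc, Nat.even_iff]
      omega
  · push_neg at hne
    have hset : {j : ℕ | 1 ≤ j ∧ spPart l j = i} = (∅ : Set ℕ) := by
      ext j
      simp only [Set.mem_setOf_eq, Set.mem_empty_iff_false, iff_false, not_and]
      intro hj1 hj2
      rw [key j] at hj2
      exact hne j hj1 hj2.1
    unfold mult
    rw [hset, Nat.card_coe_set_eq, Set.ncard_empty]
    exact Even.zero

lemma special_sp (hpart : IsPartition l) : IsSpecial (spPart l) := by
  intro j hj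
  have hp1 : 1 ≤ 2 * j - 1 := by omega
  set p := 2 * j - 1 with hp
  have hq : 2 * j = p + 1 := by omega
  rw [hq]
  have hpodd : Odd p := by rw [Nat.odd_iff]; omega
  have hqeven : Even (p + 1) := by rw [Nat.even_iff]; omega
  have hle : l (p + 1) ≤ l p := hpart p hp1
  have hnotQp_p : p ∉ Qplus l := by
    intro h
    have := h.2.1
    rw [Nat.even_iff] at this
    omega
  have hnotQm_q : p + 1 ∉ Qminus l := by
    intro h
    have := h.1
    rw [Nat.odd_iff] at this
    omega
  rcases Nat.even_or_odd (l p) with hlp | hlp <;> rcases Nat.even_or_odd (l (p + 1)) with hlq | hlq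
  · have s1 : sSeq l p = 0 := by
      apply sSeq_zero hnotQp_p
      intro h
      have := h.2.1
      rw [Nat.even_iff] at hlp; rw [Nat.odd_iff] at this; omega
    have s2 : sSeq l (p + 1) = 0 := by
      refine sSeq_zero ?_ hnotQm_q
      intro h
      have := h.2.2.1
      rw [Nat.even_iff] at hlq; rw [Nat.odd_iff] at this; omega
    rw [sp_of_zero s1, sp_of_zero s2]
    rw [Nat.even_iff] at hlp hlq
    omega
  · have hlt : l (p + 1) < l p := by
      rw [Nat.even_iff] at hlp; rw [Nat.odd_iff] at hlq; omega
    have s2 : sSeq l (p + 1) = 1 := by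
      apply sSeq_qplus
      exact ⟨by omega, hqeven, hlq, by simpa using hlt⟩
    have s1 : sSeq l p = 0 := by
      apply sSeq_zero hnotQp_p
      intro h
      have := h.2.1
      rw [Nat.even_iff] at hlp; rw [Nat.odd_iff] at this; omega
    rw [sp_of_zero s1, sp_of_one s2]
    rw [Nat.even_iff] at hlp; rw [Nat.odd_iff] at hlq
    omega
  · have hlt : l (p + 1) < l p := by
      rw [Nat.even_iff] at hlq; rw [Nat.odd_iff] at hlp; omega
    have s1 : sSeq l p = -1 := sSeq_qminus ⟨hpodd, hlp, hlt⟩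
    have s2 : sSeq l (p + 1) = 0 := by
      refine sSeq_zero ?_ hnotQm_q
      intro h
      have := h.2.2.1
      rw [Nat.even_iff] at hlq; rw [Nat.odd_iff] at this; omega
    obtain ⟨hsp, hge⟩ := sp_of_neg s1
    rw [hsp, sp_of_zero s2]
    rw [Nat.even_iff] at hlq; rw [Nat.odd_iff] at hlp
    omega
  · by_cases hlt : l (p + 1) < l p
    · have s1 : sSeq l p = -1 := sSeq_qminus ⟨hpodd, hlp, hlt⟩
      have s2 : sSeq l (p + 1) = 1 := by
        apply sSeq_qplus
        exact ⟨by omega, hqeven, hlq, by simpa using hlt⟩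
      obtain ⟨hsp, hge⟩ := sp_of_neg s1
      rw [hsp, sp_of_one s2]
      rw [Nat.odd_iff] at hlp hlq
      omega
    · have heq : l (p + 1) = l p := by omega
      have s1 : sSeq l p = 0 := by
        apply sSeq_zero hnotQp_p
        intro h
        exact absurd h.2.2 (by omega)
      have s2 : sSeq l (p + 1) = 0 := by
        refine sSeq_zero ?_ hnotQm_q
        intro h
        have := h.2.2.2
        simp only [Nat.add_sub_cancel] at this
        omega
      rw [sp_of_zero s1, sp_of_zero s2, heq]

end Aux

/-- `ν = λ + s(λ)` is a special symplectic partition of `2n`. -/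
theorem lambda_add_s_special_symplectic (n : ℕ) (l : ℕ → ℕ) (hpart : IsPartition l)
    (hzero : EventuallyZero l) (hsum : psum l = 2 * n) (hsymp : IsSymplectic l) :
    (∀ j, 1 ≤ j → 0 ≤ (l j : ℤ) + sSeq l j) ∧
    IsPartition (spPart l) ∧ EventuallyZero (spPart l) ∧
    psum (spPart l) = 2 * n ∧ IsSymplectic (spPart l) ∧ IsSpecial (spPart l) := by
  obtain ⟨N, hN⟩ := hzero
  have hzero' : EventuallyZero l := ⟨N, hN⟩
  have hspz : ∀ j, N ≤ j → spPart l j = 0 := by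
    intro j hj
    rw [sp_of_zero (sSeq_of_zero_part (hN j hj)), hN j hj]
  refine ⟨fun j _ => sSeq_nonneg_aux l j, ?_, ⟨N, hspz⟩, ?_, symp_sp hpart hzero' hsymp,
    special_sp hpart⟩
  · intro j hj
    exact Int.toNat_le_toNat (step_le hpart hj)
  · -- psum
    have e1 : psum l = ∑ j ∈ Finset.range N, l (j + 1) := by
      apply finsum_eq_sum_of_support_subset
      intro j hj
      simp only [Function.mem_support] at hj
      simp only [Finset.coe_range, Set.mem_Iio]
      by_contra h
      push_neg at h
      exact hj (hN (j + 1) (by omega))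
    have e2 : psum (spPart l) = ∑ j ∈ Finset.range N, spPart l (j + 1) := by
      apply finsum_eq_sum_of_support_subset
      intro j hj
      simp only [Function.mem_support] at hj
      simp only [Finset.coe_range, Set.mem_Iio]
      by_contra h
      push_neg at h
      exact hj (hspz (j + 1) (by omega))
    have e3 : ∑ j ∈ Finset.range N, sSeq l (j + 1) = 0 := by
      have conv : ∑ j ∈ Finset.range N, sSeq l (j + 1) = ∑ j ∈ Finset.Icc 1 N, sSeq l j := by
        rw [← Finset.Ico_add_one_right_eq_Icc, Finset.sum_Ico_eq_sum_range]
        exact (Finset.sum_congr (by norm_num) (fun k _ => by rw [Nat.add_comm])).symm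
      rw [conv]
      have split : ∀ j ∈ Finset.Icc 1 N, sSeq l j =
          (if j ∈ Qplus l then (1 : ℤ) else 0) - (if j ∈ Qminus l then (1 : ℤ) else 0) := by
        intro j _
        by_cases h1 : j ∈ Qplus l
        · rw [sSeq_qplus h1, if_pos h1, if_neg (qplus_not_qminus h1)]; norm_num
        · by_cases h2 : j ∈ Qminus l
          · rw [sSeq_qminus h2, if_neg h1, if_pos h2]; norm_num
          · rw [sSeq_zero h1 h2, if_neg h1, if_neg h2]; norm_num
      rw [Finset.sum_congr rfl split, Finset.sum_sub_distrib, Finset.sum_boole, Finset.sum_boole,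
        qcard hpart hzero' hsymp N hN, sub_self]
    have cast1 : ((∑ j ∈ Finset.range N, spPart l (j + 1) : ℕ) : ℤ)
        = ∑ j ∈ Finset.range N, ((l (j + 1) : ℤ) + sSeq l (j + 1)) := by
      push_cast
      exact Finset.sum_congr rfl (fun k _ => spPart_cast l (k + 1))
    rw [Finset.sum_add_distrib, e3, add_zero] at cast1
    have cast2 : ((∑ j ∈ Finset.range N, spPart l (j + 1) : ℕ) : ℤ) = ((2 * n : ℕ) : ℤ) := by
      rw [cast1, ← Nat.cast_sum, ← e1, hsum]
    rw [e2]
    exact_mod_cast cast2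
end
end

section
/- Let λ be a symplectic partition of 2n and ν = λ + s(λ) = sp(λ). Then P^+(ν) = P^+(λ) ∪ Q^-(λ) and P^-(ν) = P^-(λ) ∪ Q^+(λ); equivalently, ζ(λ) = ζ(ν) + s(λ) as sequences. -/
open Classical

noncomputable section

lemma oe_clash {j : ℕ} (h1 : Odd j) (h2 : Even j) : False :=
  (Nat.not_odd_iff_even.mpr h2) h1

lemma zSeq_pos {f : ℕ → ℕ} {j : ℕ} (h : j ∈ Pplus f) : zSeq f j = 1 := if_pos h

lemma zSeq_neg {f : ℕ → ℕ} {j : ℕ} (h : j ∈ Pminus f) : zSeq f j = -1 := by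
  have h' : j ∉ Pplus f := fun h' => oe_clash h'.1 h.2.1
  rw [zSeq, if_neg h', if_pos h]

lemma zSeq_zero {f : ℕ → ℕ} {j : ℕ} (h1 : j ∉ Pplus f) (h2 : j ∉ Pminus f) :
    zSeq f j = 0 := by
  rw [zSeq, if_neg h1, if_neg h2]

/-- with `ν = λ + s(λ) = sp(λ)`, one has `P^+(ν) = P^+(λ) ∪ Q^-(λ)`
and `P^-(ν) = P^-(λ) ∪ Q^+(λ)`; equivalently `ζ(λ) = ζ(ν) + s(λ)`. -/
theorem zeta_sp_relation (n : ℕ) (l : ℕ → ℕ) (hpart : IsPartition l)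
    (hzero : EventuallyZero l) (hsum : psum l = 2 * n) (hsymp : IsSymplectic l) :
    Pplus (spPart l) = Pplus l ∪ Qminus l ∧
    Pminus (spPart l) = Pminus l ∪ Qplus l ∧
    ∀ j, zSeq l j = zSeq (spPart l) j + sSeq l j := by
  classical
  have hscase : ∀ j, (sSeq l j = 1 ∧ j ∈ Qplus l) ∨ (sSeq l j = -1 ∧ j ∈ Qminus l) ∨
      (sSeq l j = 0 ∧ j ∉ Qplus l ∧ j ∉ Qminus l) := by
    intro j
    unfold sSeq
    split_ifs with h1 h2 <;> tauto
  have hnn : ∀ j, (0:ℤ) ≤ (l j : ℤ) + sSeq l j := by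
    intro j
    rcases hscase j with ⟨h, _⟩ | ⟨h, hq⟩ | ⟨h, _⟩
    · omega
    · have h2 : l j % 2 = 1 := Nat.odd_iff.mp hq.2.1
      omega
    · omega
  have hνcast : ∀ j, (spPart l j : ℤ) = (l j : ℤ) + sSeq l j := by
    intro j
    simp only [spPart]
    exact Int.toNat_of_nonneg (hnn j)
  set ν := spPart l with hνdef
  have key : ∀ j,
      (ν j = l j + 1 ∧ 2 ≤ j ∧ j % 2 = 0 ∧ l j % 2 = 1 ∧ l j < l (j-1))
    ∨ (ν j + 1 = l j ∧ j % 2 = 1 ∧ l j % 2 = 1 ∧ l (j+1) < l j)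
    ∨ (ν j = l j ∧ (j % 2 = 0 ∨ l j % 2 = 0 ∨ l j ≤ l (j+1)) ∧
        (j < 2 ∨ j % 2 = 1 ∨ l j % 2 = 0 ∨ l (j-1) ≤ l j)) := by
    intro j
    have hcast := hνcast j
    rcases hscase j with ⟨h, hq⟩ | ⟨h, hq⟩ | ⟨h, hq1, hq2⟩
    · left
      simp only [Qplus, Set.mem_setOf_eq, Nat.even_iff, Nat.odd_iff] at hq
      omega
    · right; left
      simp only [Qminus, Set.mem_setOf_eq, Nat.odd_iff] at hq
      omega
    · right; right
      simp only [Qplus, Qminus, Set.mem_setOf_eq, Nat.even_iff, Nat.odd_iff] at hq1 hq2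
      omega
  have e1 : ∀ j, 2 ≤ j → l j ≤ l (j-1) := by
    intro j hj
    have := hpart (j-1) (by omega)
    rwa [Nat.sub_add_cancel (by omega)] at this
  have hPp : ∀ j, j ∈ Pplus ν ↔ j ∈ Pplus l ∨ j ∈ Qminus l := by
    intro j
    simp only [Pplus, Qminus, Set.mem_setOf_eq, Nat.even_iff, Nat.odd_iff]
    have k1 := key j
    have k2 := key (j-1)
    have m1 := e1 j
    have m2 := hpart j
    omega
  have hPm : ∀ j, j ∈ Pminus ν ↔ j ∈ Pminus l ∨ j ∈ Qplus l := by
    intro j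
    simp only [Pminus, Qplus, Set.mem_setOf_eq, Nat.even_iff, Nat.odd_iff]
    have k1 := key j
    have k3 := key (j+1)
    have m1 := e1 j
    have m2 := hpart j
    omega
  refine ⟨Set.ext fun j => ?_, Set.ext fun j => ?_, ?_⟩
  · rw [Set.mem_union]; exact hPp j
  · rw [Set.mem_union]; exact hPm j
  · intro j
    have h1 := hPp j
    have h2 := hPm j
    rcases hscase j with ⟨hs, hq⟩ | ⟨hs, hq⟩ | ⟨hs, hq1, hq2⟩
    · -- j ∈ Qplus l : j even, l j odd
      have hmv : j ∈ Pminus ν := h2.mpr (Or.inr hq)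
      have hnpl : j ∉ Pplus l := fun h => oe_clash h.1 hq.2.1
      have hnml : j ∉ Pminus l := fun h => oe_clash hq.2.2.1 h.2.2.1
      rw [zSeq_zero hnpl hnml, zSeq_neg hmv, hs]; norm_num
    · -- j ∈ Qminus l : j odd, l j odd
      have hpv : j ∈ Pplus ν := h1.mpr (Or.inr hq)
      have hnpl : j ∉ Pplus l := fun h => oe_clash hq.2.1 h.2.1
      have hnml : j ∉ Pminus l := fun h => oe_clash hq.1 h.2.1
      rw [zSeq_zero hnpl hnml, zSeq_pos hpv, hs]; norm_num
    · rw [hs, add_zero]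
      by_cases hp : j ∈ Pplus l
      · rw [zSeq_pos hp, zSeq_pos (h1.mpr (Or.inl hp))]
      · by_cases hm : j ∈ Pminus l
        · rw [zSeq_neg hm, zSeq_neg (h2.mpr (Or.inl hm))]
        · rw [zSeq_zero hp hm,
            zSeq_zero (fun h => (h1.mp h).elim hp hq2) (fun h => (h2.mp h).elim hm hq1)]
end
end

section
/- Let λ be a symplectic partition of 2m, and let i_1 > i_2 > ... > i_t be the even positive integers i such that the multiplicity of i in λ is odd (if their number is odd, append i_t = 0 to make t even). For h = 1, ..., t, one has j_min(i_h) ≡ h mod 2, and if i_h ≠ 0 then j_max(i_h) ≡ h mod 2, where j_min(i) and j_max(i) denote the smallest and largest index j with λ_j = i (with j_min(0) = length(λ)+1). -/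
open Classical

noncomputable section

/-- A partition is antitone on indices `≥ 1`. -/
lemma part_anti (l : ℕ → ℕ) (hpart : IsPartition l) :
    ∀ j j' : ℕ, 1 ≤ j → j ≤ j' → l j' ≤ l j := by
  intro j j' h1 hle
  induction j' with
  | zero => omega
  | succ n ih =>
    rcases Nat.lt_or_ge j (n + 1) with hlt | hge
    · have h1n : 1 ≤ n := by omega
      have := hpart n h1n
      have := ih (by omega)
      omega
    · have : j = n + 1 := by omega
      subst this; exact le_refl _

/-- A downward-closed (within `[1,∞)`) finite set of positive naturals is an
initial segment. -/
lemma initial_segment (s : Finset ℕ) (hpos : ∀ j ∈ s, 1 ≤ j)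
    (hdc : ∀ j ∈ s, ∀ k, 1 ≤ k → k ≤ j → k ∈ s) :
    s = Finset.Icc 1 s.card := by
  ext j
  simp only [Finset.mem_Icc]
  constructor
  · intro hj
    refine ⟨hpos j hj, ?_⟩
    have hsub : Finset.Icc 1 j ⊆ s := by
      intro k hk
      simp only [Finset.mem_Icc] at hk
      exact hdc j hj k hk.1 hk.2
    have := Finset.card_le_card hsub
    simpa using this
  · rintro ⟨h1, h2⟩
    by_contra hcon
    have hsub : s ⊆ Finset.Icc 1 (j - 1) := by
      intro k hk
      simp only [Finset.mem_Icc]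
      refine ⟨hpos k hk, ?_⟩
      by_contra hk2
      have hjk : j ≤ k := by omega
      exact hcon (hdc k hk j h1 hjk)
    have := Finset.card_le_card hsub
    simp only [Nat.card_Icc] at this
    omega

/-- for `h = 1, ..., t`, `j_min(i_h) ≡ h mod 2` and, if `i_h ≠ 0`,
`j_max(i_h) ≡ h mod 2`. -/
theorem jmin_jmax_parity (m : ℕ) (l iSeq : ℕ → ℕ) (t : ℕ)
    (hpart : IsPartition l) (hzero : EventuallyZero l) (hsum : psum l = 2 * m)
    (hsymp : IsSymplectic l) (hmark : MarkedSeq l iSeq t) :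
    ∀ h, 1 ≤ h → h ≤ t →
      jminPart l (iSeq h) % 2 = h % 2 ∧
      (iSeq h ≠ 0 → jmaxPart l (iSeq h) % 2 = h % 2) := by
  obtain ⟨N0, hN0⟩ := hzero
  set N := N0 + 1 with hNdef
  have hN : ∀ j, N ≤ j → l j = 0 := fun j hj => hN0 j (by omega)
  obtain ⟨hteven, hdec, heven, hoddm, hall⟩ := hmark
  have anti := part_anti l hpart
  -- the counting function `c i = #{j ≥ 1 : l j > i}`
  set c : ℕ → ℕ := fun i => ((Finset.Icc 1 N).filter (fun j => i < l j)).card with hc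
  -- membership characterization of the "greater" set
  have memG : ∀ i j, (1 ≤ j ∧ i < l j) ↔ (1 ≤ j ∧ j ≤ c i) := by
    intro i
    have hseg : (Finset.Icc 1 N).filter (fun j => i < l j) = Finset.Icc 1 (c i) := by
      apply initial_segment
      · intro j hj
        simp only [Finset.mem_filter, Finset.mem_Icc] at hj
        exact hj.1.1
      · intro j hj k hk1 hkj
        simp only [Finset.mem_filter, Finset.mem_Icc] at hj ⊢
        exact ⟨⟨hk1, le_trans hkj hj.1.2⟩, lt_of_lt_of_le hj.2 (anti k j hk1 hkj)⟩
    intro j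
    have hmem : j ∈ (Finset.Icc 1 N).filter (fun j => i < l j) ↔ j ∈ Finset.Icc 1 (c i) := by
      rw [hseg]
    simp only [Finset.mem_filter, Finset.mem_Icc] at hmem
    constructor
    · rintro ⟨h1, h2⟩
      have hjN : j ≤ N := by
        by_contra hcon
        have := hN j (by omega)
        omega
      exact hmem.mp ⟨⟨h1, hjN⟩, h2⟩
    · rintro ⟨h1, h2⟩
      have := hmem.mpr ⟨h1, h2⟩
      exact ⟨h1, this.2⟩
  -- jmin formula
  have jmin_eq : ∀ i, {j | 1 ≤ j ∧ l j = i}.Nonempty →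
      jminPart l i = c i + 1 := by
    intro i ⟨j0, hj0⟩
    obtain ⟨hj01, hj02⟩ := hj0
    have hj0lb : c i + 1 ≤ j0 := by
      by_contra hcon
      have := (memG i j0).mpr ⟨hj01, by omega⟩
      omega
    have hval : l (c i + 1) = i := by
      have h1 : l j0 ≤ l (c i + 1) := anti (c i + 1) j0 (by omega) hj0lb
      have h2 : ¬ (i < l (c i + 1)) := by
        intro hlt
        have := (memG i (c i + 1)).mp ⟨by omega, hlt⟩
        omega
      omega
    have hmem : c i + 1 ∈ {j | 1 ≤ j ∧ l j = i} := ⟨by omega, hval⟩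
    have hlb : ∀ j ∈ {j | 1 ≤ j ∧ l j = i}, c i + 1 ≤ j := by
      rintro j ⟨hj1, hj2⟩
      by_contra hcon
      have := (memG i j).mpr ⟨hj1, by omega⟩
      omega
    unfold jminPart
    exact le_antisymm (Nat.sInf_le hmem) (le_csInf ⟨_, hmem⟩ hlb)
  -- multiplicity as a finset card for positive values
  have mult_eq : ∀ v, 0 < v →
      mult l v = ((Finset.Icc 1 N).filter (fun j => l j = v)).card := by
    intro v hv
    have hset : {j : ℕ | 1 ≤ j ∧ l j = v}
        = ↑((Finset.Icc 1 N).filter (fun j => l j = v)) := by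
      ext j
      simp only [Set.mem_setOf_eq, Finset.coe_filter, Finset.mem_Icc, Set.mem_setOf_eq]
      constructor
      · rintro ⟨h1, h2⟩
        have hjN : j ≤ N := by
          by_contra hcon
          have := hN j (by omega)
          omega
        exact ⟨⟨h1, hjN⟩, h2⟩
      · rintro ⟨⟨h1, _⟩, h2⟩
        exact ⟨h1, h2⟩
    rw [mult, hset, Nat.card_coe_set_eq, Set.ncard_coe_finset]
  -- a value with odd multiplicity occurs
  have mult_nonempty : ∀ v, mult l v ≠ 0 → {j : ℕ | 1 ≤ j ∧ l j = v}.Nonempty := by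
    intro v hv
    rw [mult, Nat.card_coe_set_eq] at hv
    exact Set.nonempty_of_ncard_ne_zero hv
  -- parity count of c (iSeq h)
  have cparity : ∀ h, 1 ≤ h → h ≤ t → c (iSeq h) % 2 = (h - 1) % 2 := by
    intro h hh1 hht
    set i := iSeq h with hi
    -- decompose by value
    have hbi : (Finset.Icc 1 N).filter (fun j => i < l j)
        = (Finset.Ioc i (l 1)).biUnion
            (fun v => (Finset.Icc 1 N).filter (fun j => l j = v)) := by
      ext j
      simp only [Finset.mem_filter, Finset.mem_biUnion, Finset.mem_Icc, Finset.mem_Ioc]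
      constructor
      · rintro ⟨⟨h1, h2⟩, h3⟩
        exact ⟨l j, ⟨h3, anti 1 j (le_refl 1) h1⟩, ⟨h1, h2⟩, rfl⟩
      · rintro ⟨v, ⟨hv1, _⟩, ⟨h1, h2⟩, h3⟩
        exact ⟨⟨h1, h2⟩, by omega⟩
    have hcard : c i = ∑ v ∈ Finset.Ioc i (l 1),
        ((Finset.Icc 1 N).filter (fun j => l j = v)).card := by
      rw [hc]
      simp only
      rw [hbi]
      apply Finset.card_biUnion
      intro x _ y _ hxy
      rw [Function.onFun, Finset.disjoint_left]
      intro a ha hb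
      simp only [Finset.mem_filter] at ha hb
      exact hxy (ha.2 ▸ hb.2)
    have hcard' : c i = ∑ v ∈ Finset.Ioc i (l 1), mult l v := by
      rw [hcard]
      apply Finset.sum_congr rfl
      intro v hv
      simp only [Finset.mem_Ioc] at hv
      exact (mult_eq v (by omega)).symm
    -- parity of sum = card of odd-multiplicity values
    have hpar : (∑ v ∈ Finset.Ioc i (l 1), mult l v) % 2
        = ((Finset.Ioc i (l 1)).filter (fun v => mult l v % 2 = 1)).card % 2 := by
      rw [Finset.sum_nat_mod]
      congr 1
      rw [Finset.card_filter]
      apply Finset.sum_congr rfl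
      intro v _
      split_ifs with hv
      · omega
      · omega
    -- the odd-multiplicity values above i are exactly iSeq 1, ..., iSeq (h-1)
    have himg : (Finset.Ioc i (l 1)).filter (fun v => mult l v % 2 = 1)
        = (Finset.Icc 1 (h - 1)).image iSeq := by
      ext v
      simp only [Finset.mem_filter, Finset.mem_Ioc, Finset.mem_image, Finset.mem_Icc]
      constructor
      · rintro ⟨⟨hv1, hv2⟩, hv3⟩
        have hvpos : 0 < v := by omega
        have hveven : Even v := by
          by_contra hcon
          have hvodd : Odd v := Nat.not_even_iff_odd.mp hcon
          have := hsymp v hvodd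
          rw [Nat.even_iff] at this
          omega
        have hvoddm : Odd (mult l v) := Nat.odd_iff.mpr hv3
        obtain ⟨h', hh'1, hh't, hh'v⟩ := hall v hvpos hveven hvoddm
        have hh'h : h' < h := by
          by_contra hcon
          push_neg at hcon
          rcases Nat.lt_or_ge h h' with hlt | hge
          · have := hdec h h' hh1 hlt hh't
            omega
          · have : h = h' := by omega
            subst this
            omega
        exact ⟨h', ⟨hh'1, by omega⟩, hh'v⟩
      · rintro ⟨h', ⟨hh'1, hh'2⟩, hh'v⟩
        have hh'h : h' < h := by omega
        have hgt : i < iSeq h' := hdec h' h hh'1 hh'h hht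
        have hvpos : 0 < iSeq h' := by omega
        have hoddv : Odd (mult l (iSeq h')) :=
          hoddm h' hh'1 (by omega) (by omega)
        have hne : {j : ℕ | 1 ≤ j ∧ l j = iSeq h'}.Nonempty := by
          apply mult_nonempty
          intro hz
          rw [hz, Nat.odd_iff] at hoddv
          omega
        obtain ⟨j0, hj01, hj02⟩ := hne
        have hle1 : iSeq h' ≤ l 1 := by
          have := anti 1 j0 (le_refl 1) hj01
          omega
        refine ⟨⟨by omega, by omega⟩, ?_⟩
        rw [← hh'v]
        exact Nat.odd_iff.mp hoddv
    have hinj : Set.InjOn iSeq ↑(Finset.Icc 1 (h - 1)) := by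
      intro a ha b hb hab
      simp only [Finset.coe_Icc, Set.mem_Icc] at ha hb
      by_contra hne
      rcases Nat.lt_or_ge a b with hlt | hge
      · have := hdec a b ha.1 hlt (by omega)
        omega
      · have hlt : b < a := by omega
        have := hdec b a hb.1 hlt (by omega)
        omega
    have hcardimg : ((Finset.Icc 1 (h - 1)).image iSeq).card = h - 1 := by
      rw [Finset.card_image_of_injOn hinj, Nat.card_Icc]
      omega
    rw [hcard', hpar, himg, hcardimg]
  -- now prove the statement
  intro h hh1 hht
  set i := iSeq h with hi
  have hne : {j : ℕ | 1 ≤ j ∧ l j = i}.Nonempty := by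
    rcases Nat.eq_zero_or_pos i with hz | hp
    · exact ⟨N, by omega, by rw [hz]; exact hN N (le_refl _)⟩
    · apply mult_nonempty
      have hod := hoddm h hh1 hht (by omega)
      intro hcon
      rw [hcon, Nat.odd_iff] at hod
      omega
  have hjmin : jminPart l i = c i + 1 := jmin_eq i hne
  have hcpar : c i % 2 = (h - 1) % 2 := cparity h hh1 hht
  constructor
  · rw [hjmin]
    omega
  · intro hi0
    -- jmax part
    set S := {j : ℕ | 1 ≤ j ∧ l j = i} with hS
    have hbdd : BddAbove S := by
      refine ⟨N, fun j hj => ?_⟩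
      by_contra hcon
      have := hN j (by omega)
      have := hj.2
      omega
    have hamem : jminPart l i ∈ S := Nat.sInf_mem hne
    have hbmem : jmaxPart l i ∈ S := Nat.sSup_mem hne hbdd
    set a := jminPart l i with ha
    set b := jmaxPart l i with hb
    have hab : a ≤ b := le_csSup hbdd hamem
    have hSeq : S = Set.Icc a b := by
      ext j
      simp only [Set.mem_Icc]
      constructor
      · intro hj
        exact ⟨Nat.sInf_le hj, le_csSup hbdd hj⟩
      · rintro ⟨hj1, hj2⟩
        have h1a : 1 ≤ a := hamem.1
        have h1 : l j ≤ l a := anti a j h1a hj1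
        have h2 : l b ≤ l j := anti j b (by omega) hj2
        have h3 : l a = i := hamem.2
        have h4 : l b = i := hbmem.2
        exact ⟨by omega, by omega⟩
    have hmult : mult l i = b + 1 - a := by
      rw [mult, Nat.card_coe_set_eq]
      show S.ncard = b + 1 - a
      rw [hSeq, ← Finset.coe_Icc, Set.ncard_coe_finset, Nat.card_Icc]
    have hodd : Odd (mult l i) := hoddm h hh1 hht hi0
    rw [Nat.odd_iff] at hodd
    have hjm : a = c i + 1 := hjmin
    omega
end
end

section
/- Let λ be a symplectic partition, i an even part with even multiplicity in λ, or i = 0 when the number of even positive parts with odd multiplicity is even; suppose moreover that i does not lie strictly between i_{2h-1} and i_{2h} for any h (the i_k being the even positive integers of odd multiplicity listed in decreasing order, completed by 0 if their number is odd). Then j_min(i) is odd and, if i ≠ 0, j_max(i) is even. -/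
open Classical

noncomputable section

lemma part_mono {l : ℕ → ℕ} (hpart : IsPartition l) {j j' : ℕ} (h1 : 1 ≤ j) (hle : j ≤ j') :
    l j' ≤ l j := by
  induction j', hle using Nat.le_induction with
  | base => exact le_refl _
  | succ n hmn ih => exact le_trans (hpart n (le_trans h1 hmn)) ih

lemma downclosed_eq_Ico {B : Finset ℕ}
    (hdc : ∀ j ∈ B, ∀ j', 1 ≤ j' → j' ≤ j → j' ∈ B) (h0 : 0 ∉ B) :
    B = Finset.Ico 1 (B.card + 1) := by
  refine Finset.eq_of_subset_of_card_le ?_ (by simp)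
  intro j hj
  simp only [Finset.mem_Ico]
  have h1 : 1 ≤ j := by
    rcases Nat.eq_zero_or_pos j with h | h
    · exact absurd (h ▸ hj) h0
    · exact h
  refine ⟨h1, ?_⟩
  by_contra hcon
  push_neg at hcon
  have hsub : Finset.Ico 1 (j + 1) ⊆ B := by
    intro j' hj'
    simp only [Finset.mem_Ico] at hj'
    exact hdc j hj j' hj'.1 (by omega)
  have := Finset.card_le_card hsub
  simp [Nat.card_Ico] at this
  omega

lemma sum_mod_two (s : Finset ℕ) (f : ℕ → ℕ) :
    (∑ k ∈ s, f k) % 2 = ((s.filter (fun k => Odd (f k))).card) % 2 := by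
  rw [Finset.sum_nat_mod]
  congr 1
  rw [← Finset.sum_filter_add_sum_filter_not s (fun k => Odd (f k)) (fun k => f k % 2)]
  have h1 : ∀ k ∈ s.filter (fun k => Odd (f k)), f k % 2 = 1 :=
    fun k hk => Nat.odd_iff.mp (Finset.mem_filter.mp hk).2
  have h2 : ∀ k ∈ s.filter (fun k => ¬ Odd (f k)), f k % 2 = 0 :=
    fun k hk => Nat.even_iff.mp (Nat.not_odd_iff_even.mp (Finset.mem_filter.mp hk).2)
  rw [Finset.sum_congr rfl h1, Finset.sum_congr rfl h2, Finset.sum_const, Finset.sum_const]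
  simp

lemma mult_pos_witness {l : ℕ → ℕ} {k : ℕ} (h : 0 < mult l k) : ∃ j, 1 ≤ j ∧ l j = k := by
  rw [mult] at h
  obtain ⟨⟨⟨j, hj⟩⟩, -⟩ := Nat.card_pos_iff.mp h
  exact ⟨j, hj⟩

/-- for `i` an even part of even multiplicity (or `i = 0` when no
`0` was appended to the marked sequence), not lying strictly between `i_{2h-1}`
and `i_{2h}` for any `h`, `j_min(i)` is odd and, if `i ≠ 0`, `j_max(i)` is even. -/
theorem jmin_odd_jmax_even (l iSeq : ℕ → ℕ) (t : ℕ) (i : ℕ)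
    (hpart : IsPartition l) (hzero : EventuallyZero l) (hsymp : IsSymplectic l)
    (hmark : MarkedSeq l iSeq t)
    (hi : (0 < i ∧ Even i ∧ 0 < mult l i ∧ Even (mult l i)) ∨
          (i = 0 ∧ ∀ h, 1 ≤ h → h ≤ t → iSeq h ≠ 0))
    (hnotbetween : ¬ ∃ h, 1 ≤ h ∧ 2 * h ≤ t ∧ iSeq (2 * h) < i ∧ i < iSeq (2 * h - 1)) :
    Odd (jminPart l i) ∧ (i ≠ 0 → Even (jmaxPart l i)) := by
  obtain ⟨N0, hN0⟩ := hzero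
  set N := N0 + 1 with hNdef
  have hNz : ∀ j, N ≤ j → l j = 0 := fun j hj => hN0 j (by omega)
  have hmono : ∀ j j', 1 ≤ j → j ≤ j' → l j' ≤ l j := fun j j' h1 h2 => part_mono hpart h1 h2
  -- multiplicity of positive parts as a finset card
  have hmult : ∀ k, 0 < k → mult l k = ((Finset.Ico 1 N).filter (fun j => l j = k)).card := by
    intro k hk
    have hset : {j : ℕ | 1 ≤ j ∧ l j = k} =
        ↑((Finset.Ico 1 N).filter (fun j => l j = k)) := by
      ext j
      simp only [Set.mem_setOf_eq, Finset.coe_filter, Finset.mem_Ico, Set.mem_setOf_eq]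
      constructor
      · rintro ⟨h1, h2⟩
        refine ⟨⟨h1, ?_⟩, h2⟩
        by_contra h
        push_neg at h
        have := hNz j h
        omega
      · rintro ⟨⟨h1, _⟩, h2⟩
        exact ⟨h1, h2⟩
    rw [mult, hset, Nat.card_coe_set_eq, Set.ncard_coe_finset]
  obtain ⟨ht_even, hdec, hevenSeq, hoddmult, hsurj⟩ := hmark
  -- the finset B of indices with part > i
  set B : Finset ℕ := (Finset.Ico 1 N).filter (fun j => i < l j) with hBdef
  set n := B.card with hndef
  have hBdc : ∀ j ∈ B, ∀ j', 1 ≤ j' → j' ≤ j → j' ∈ B := by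
    intro j hj j' h1 hle
    simp only [hBdef, Finset.mem_filter, Finset.mem_Ico] at hj ⊢
    exact ⟨⟨h1, by omega⟩, lt_of_lt_of_le hj.2 (hmono j' j h1 hle)⟩
  have hB0 : 0 ∉ B := by simp [hBdef]
  have hBeq : B = Finset.Ico 1 (n + 1) := downclosed_eq_Ico hBdc hB0
  -- basic consequences
  have hgt : ∀ j, 1 ≤ j → j ≤ n → i < l j := by
    intro j h1 h2
    have : j ∈ B := by rw [hBeq]; simp only [Finset.mem_Ico]; omega
    simp only [hBdef, Finset.mem_filter] at this
    exact this.2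
  have hln1le : l (n + 1) ≤ i := by
    by_contra h
    push_neg at h
    have hlt : n + 1 < N := by
      by_contra h2
      push_neg at h2
      have := hNz (n + 1) h2
      omega
    have : (n + 1) ∈ B := by
      simp only [hBdef, Finset.mem_filter, Finset.mem_Ico]
      exact ⟨⟨by omega, hlt⟩, h⟩
    rw [hBeq] at this
    simp only [Finset.mem_Ico] at this
    omega
  -- existence of an index with part i
  have hwit : ∃ j, 1 ≤ j ∧ l j = i := by
    rcases hi with ⟨hipos, _, hmpos, _⟩ | ⟨hi0, _⟩
    · exact mult_pos_witness hmpos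
    · exact ⟨N, by omega, hi0 ▸ hNz N le_rfl⟩
  have hleast : ∀ j, 1 ≤ j → l j = i → n + 1 ≤ j := by
    intro j h1 h2
    by_contra h
    push_neg at h
    have := hgt j h1 (by omega)
    omega
  have hln1 : l (n + 1) = i := by
    obtain ⟨j0, hj01, hj02⟩ := hwit
    have h1 := hleast j0 hj01 hj02
    have h2 := hmono (n + 1) j0 (by omega) h1
    omega
  have hjmin : jminPart l i = n + 1 := by
    have hmem : (n + 1) ∈ {j : ℕ | 1 ≤ j ∧ l j = i} := ⟨by omega, hln1⟩
    apply le_antisymm (Nat.sInf_le hmem)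
    have hm := Nat.sInf_mem (⟨n + 1, hmem⟩ : Set.Nonempty {j : ℕ | 1 ≤ j ∧ l j = i})
    exact hleast _ hm.1 hm.2
  -- counting: n = sum of multiplicities of parts > i
  have hfib : ∀ k ∈ Finset.Ioc i (l 1),
      B.filter (fun j => l j = k) = (Finset.Ico 1 N).filter (fun j => l j = k) := by
    intro k hk
    rw [Finset.mem_Ioc] at hk
    rw [hBdef, Finset.filter_filter]
    apply Finset.filter_congr
    intro j _
    constructor
    · exact fun h => h.2
    · exact fun h => ⟨by omega, h⟩
  have hnsum : n = ∑ k ∈ Finset.Ioc i (l 1), mult l k := by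
    have h1 : B.card = ∑ k ∈ Finset.Ioc i (l 1), (B.filter (fun j => l j = k)).card := by
      apply Finset.card_eq_sum_card_fiberwise (f := l)
      intro j hj
      simp only [hBdef, Finset.mem_coe, Finset.mem_filter, Finset.mem_Ico] at hj
      exact Finset.mem_Ioc.mpr ⟨hj.2, hmono 1 j le_rfl hj.1.1⟩
    rw [hndef, h1]
    apply Finset.sum_congr rfl
    intro k hk
    rw [hfib k hk, hmult k (by rw [Finset.mem_Ioc] at hk; omega)]
  -- parity: reduce to the marked sequence
  set K : Finset ℕ := (Finset.Ioc i (l 1)).filter (fun k => Odd (mult l k)) with hKdef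
  set H : Finset ℕ := (Finset.Icc 1 t).filter (fun h => i < iSeq h) with hHdef
  have hHK : H.card = K.card := by
    apply Finset.card_bij (fun h _ => iSeq h)
    · intro h hh
      simp only [hHdef, Finset.mem_filter, Finset.mem_Icc] at hh
      obtain ⟨⟨hh1, hh2⟩, hh3⟩ := hh
      have hne : iSeq h ≠ 0 := by omega
      have hodd := hoddmult h hh1 hh2 hne
      have hpos : 0 < mult l (iSeq h) := hodd.pos
      obtain ⟨j0, hj01, hj02⟩ := mult_pos_witness hpos
      have hle1 : iSeq h ≤ l 1 := hj02 ▸ hmono 1 j0 le_rfl hj01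
      simp only [hKdef, Finset.mem_filter, Finset.mem_Ioc]
      exact ⟨⟨hh3, hle1⟩, hodd⟩
    · intro h1 hh1 h2 hh2 heq
      simp only [hHdef, Finset.mem_filter, Finset.mem_Icc] at hh1 hh2
      by_contra hne
      rcases Nat.lt_or_ge h1 h2 with h | h
      · have := hdec h1 h2 hh1.1.1 h hh2.1.2
        omega
      · have : h2 < h1 := by omega
        have := hdec h2 h1 hh2.1.1 this hh1.1.2
        omega
    · intro k hk
      simp only [hKdef, Finset.mem_filter, Finset.mem_Ioc] at hk
      obtain ⟨⟨hk1, hk2⟩, hk3⟩ := hk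
      have hkeven : Even k := by
        by_contra h
        have := hsymp k (Nat.not_even_iff_odd.mp h)
        rw [Nat.even_iff] at this
        rw [Nat.odd_iff] at hk3
        omega
      obtain ⟨h, hh1, hh2, hh3⟩ := hsurj k (by omega) hkeven hk3
      refine ⟨h, ?_, hh3⟩
      simp only [hHdef, Finset.mem_filter, Finset.mem_Icc]
      exact ⟨⟨hh1, hh2⟩, by omega⟩
  set m := H.card with hmdef
  have hHdc : ∀ h ∈ H, ∀ h', 1 ≤ h' → h' ≤ h → h' ∈ H := by
    intro h hh h' h1 hle
    simp only [hHdef, Finset.mem_filter, Finset.mem_Icc] at hh ⊢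
    refine ⟨⟨h1, le_trans hle hh.1.2⟩, ?_⟩
    rcases Nat.lt_or_ge h' h with hlt | hge
    · have := hdec h' h h1 hlt hh.1.2
      omega
    · have : h' = h := by omega
      rw [this]
      exact hh.2
  have hH0 : 0 ∉ H := by simp [hHdef]
  have hHeq : H = Finset.Ico 1 (m + 1) := downclosed_eq_Ico hHdc hH0
  have hmEven : Even m := by
    by_contra hmodd
    rw [Nat.not_even_iff_odd] at hmodd
    have hm1 : 1 ≤ m := by
      rcases Nat.eq_zero_or_pos m with h | h
      · rw [h] at hmodd; simp at hmodd
      · exact h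
    have hmH : m ∈ H := by rw [hHeq]; simp only [Finset.mem_Ico]; omega
    simp only [hHdef, Finset.mem_filter, Finset.mem_Icc] at hmH
    have hmt : m + 1 ≤ t := by
      have hmlet := hmH.1.2
      rcases Nat.eq_or_lt_of_le hmlet with h | h
      · exfalso
        rw [h] at hmodd
        rw [Nat.even_iff] at ht_even
        rw [Nat.odd_iff] at hmodd
        omega
      · omega
    have hm1notH : (m + 1) ∉ H := by
      rw [hHeq]; simp only [Finset.mem_Ico]; omega
    have hile : iSeq (m + 1) ≤ i := by
      by_contra h
      push_neg at h
      apply hm1notH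
      simp only [hHdef, Finset.mem_filter, Finset.mem_Icc]
      exact ⟨⟨by omega, hmt⟩, h⟩
    obtain ⟨r, hr⟩ := hmodd
    -- m = 2r+1, take h = r+1: 2h-1 = m, 2h = m+1
    rcases Nat.lt_or_ge (iSeq (m + 1)) i with hlt | hge
    · apply hnotbetween
      refine ⟨r + 1, by omega, by omega, ?_, ?_⟩
      · have : 2 * (r + 1) = m + 1 := by omega
        rw [this]; exact hlt
      · have : 2 * (r + 1) - 1 = m := by omega
        rw [this]; exact hmH.2
    · have heqi : iSeq (m + 1) = i := by omega
      rcases hi with ⟨hipos, _, _, hmEv⟩ | ⟨hi0, hnz⟩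
      · have := hoddmult (m + 1) (by omega) hmt (by omega)
        rw [heqi] at this
        rw [Nat.even_iff] at hmEv
        rw [Nat.odd_iff] at this
        omega
      · exact hnz (m + 1) (by omega) hmt (by omega)
  have hnEven : Even n := by
    have h1 : n % 2 = K.card % 2 := by
      rw [hnsum, hKdef]
      exact sum_mod_two _ _
    rw [Nat.even_iff, h1, ← hHK]
    exact Nat.even_iff.mp hmEven
  refine ⟨?_, ?_⟩
  · rw [hjmin]
    exact Even.add_one hnEven
  · intro hine
    have hipos : 0 < i := Nat.pos_of_ne_zero hine
    obtain ⟨_, _, hmpos, hmEv⟩ : 0 < i ∧ Even i ∧ 0 < mult l i ∧ Even (mult l i) := by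
      rcases hi with h | ⟨h0, _⟩
      · exact h
      · omega
    set A : Finset ℕ := (Finset.Ico 1 N).filter (fun j => l j = i) with hAdef
    set c := A.card with hcdef
    have hcmult : mult l i = c := hmult i hipos
    have hcpos : 0 < c := hcmult ▸ hmpos
    have hcEven : Even c := hcmult ▸ hmEv
    set C : Finset ℕ := (Finset.Ico 1 N).filter (fun j => i ≤ l j) with hCdef
    have hCcard : C.card = n + c := by
      rw [← Finset.card_filter_add_card_filter_not
        (s := C) (p := fun j => i < l j)]
      congr 1
      · rw [hCdef, Finset.filter_filter, hndef, hBdef]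
        congr 1
        apply Finset.filter_congr
        intro j _
        constructor
        · exact fun h => h.2
        · exact fun h => ⟨by omega, h⟩
      · rw [hCdef, Finset.filter_filter, hcdef, hAdef]
        congr 1
        apply Finset.filter_congr
        intro j _
        constructor
        · intro h; omega
        · intro h; omega
    have hCdc : ∀ j ∈ C, ∀ j', 1 ≤ j' → j' ≤ j → j' ∈ C := by
      intro j hj j' h1 hle
      simp only [hCdef, Finset.mem_filter, Finset.mem_Ico] at hj ⊢
      exact ⟨⟨h1, by omega⟩, le_trans hj.2 (hmono j' j h1 hle)⟩
    have hC0 : 0 ∉ C := by simp [hCdef]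
    have hCeq : C = Finset.Ico 1 (n + c + 1) := by
      rw [downclosed_eq_Ico hCdc hC0, hCcard]
    have hub : ∀ j, 1 ≤ j → l j = i → j ≤ n + c := by
      intro j h1 h2
      have hjN : j < N := by
        by_contra h
        push_neg at h
        have := hNz j h
        omega
      have : j ∈ C := by
        simp only [hCdef, Finset.mem_filter, Finset.mem_Ico]
        exact ⟨⟨h1, hjN⟩, le_of_eq h2.symm⟩
      rw [hCeq] at this
      simp only [Finset.mem_Ico] at this
      omega
    have hlnc : l (n + c) = i := by
      have hmemC : (n + c) ∈ C := by
        rw [hCeq]; simp only [Finset.mem_Ico]; omega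
      simp only [hCdef, Finset.mem_filter, Finset.mem_Ico] at hmemC
      have h1 : l (n + c) ≤ l (n + 1) := hmono (n + 1) (n + c) (by omega) (by omega)
      rw [hln1] at h1
      omega
    have hmemS : (n + c) ∈ {j : ℕ | 1 ≤ j ∧ l j = i} := ⟨by omega, hlnc⟩
    have hubS : (n + c) ∈ upperBounds {j : ℕ | 1 ≤ j ∧ l j = i} := by
      intro j hj
      exact hub j hj.1 hj.2
    have hjmax : jmaxPart l i = n + c := by
      apply le_antisymm
      · have hmem := Nat.sSup_mem (⟨n + c, hmemS⟩ : Set.Nonempty _) ⟨n + c, hubS⟩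
        exact hub _ hmem.1 hmem.2
      · exact le_csSup ⟨n + c, hubS⟩ hmemS
    rw [hjmax]
    exact hnEven.add hcEven
end
end

section
/- Let λ be a special orthogonal partition of 2m. Define P^+(λ) as the set of odd indices j ≥ 1 with λ_j odd and λ_{j-1} > λ_j (λ_0 = ∞), and P^-(λ) as the set of even indices j ≥ 2 with λ_j odd and λ_j > λ_{j+1}. Then |P^+(λ)| = |P^-(λ)|. -/
open Classical

noncomputable section

/-- The forward map: sends an odd index `2a-1` to `2b` where `b` is the first
`k ≥ a` with a strict drop `l (2k) > l (2k+1)`. -/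
def fI (l : ℕ → ℕ) (j : ℕ) : ℕ := 2 * sInf {k | (j+1)/2 ≤ k ∧ l (2*k+1) < l (2*k)}

/-- The backward map: sends an even index `2b` to `2a-1` where `a` is the last
`k ≤ b` with `k = 1` or a strict drop `l (2k-2) > l (2k-1)`. -/
def gI (l : ℕ → ℕ) (j : ℕ) : ℕ :=
  2 * sSup {k | k ≤ j/2 ∧ (k = 1 ∨ l (2*k-1) < l (2*k-2))} - 1

lemma fwd_odd {l : ℕ → ℕ} (hpart : IsPartition l) (hspec : IsSpecial l) {a b : ℕ}
    (ha : 1 ≤ a) (hodd : l (2*a) % 2 = 1)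
    (hb : ∀ k, a ≤ k → k < b → ¬ l (2*k+1) < l (2*k)) :
    ∀ k, a ≤ k → k ≤ b → l (2*k) % 2 = 1 := by
  intro k hak
  induction k, hak using Nat.le_induction with
  | base => intro _; exact hodd
  | succ n hn ih =>
    intro hkb
    have h1 : n < b := by omega
    have hp := hpart (2*n) (by omega)
    have hb' := hb n hn h1
    have h2 : l (2*n) = l (2*n+1) := by omega
    have h3 := hspec (n+1) (by omega)
    rw [show 2*(n+1) - 1 = 2*n+1 by omega] at h3
    have h5 : l (2*n) % 2 = 1 := ih (by omega)
    omega

lemma bwd_odd {l : ℕ → ℕ} (hspec : IsSpecial l) {a b : ℕ} (ha : 1 ≤ a)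
    (hodd : l (2*b) % 2 = 1)
    (heq : ∀ k, a ≤ k → k < b → l (2*k) = l (2*k+1)) :
    ∀ k, a ≤ k → k ≤ b → l (2*k) % 2 = 1 := by
  have key : ∀ d, a ≤ b - d → l (2*(b-d)) % 2 = 1 := by
    intro d
    induction d with
    | zero => intro _; simpa using hodd
    | succ n ih =>
      intro h
      have h3 : l (2*(b - n)) % 2 = 1 := ih (by omega)
      have e1 : b - n = b - (n+1) + 1 := by omega
      rw [e1] at h3
      have h2 := heq (b-(n+1)) h (by omega)
      have h4 := hspec (b-(n+1)+1) (by omega)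
      rw [show 2*(b-(n+1)+1) - 1 = 2*(b-(n+1))+1 by omega] at h4
      omega
  intro k hak hkb
  have := key (b - k) (by omega)
  rwa [show b - (b-k) = k by omega] at this

lemma drop_exists {l : ℕ → ℕ} (hpart : IsPartition l) (hspec : IsSpecial l)
    (hzero : EventuallyZero l) {a : ℕ} (ha : 1 ≤ a) (hodd : l (2*a) % 2 = 1) :
    ∃ k, a ≤ k ∧ l (2*k+1) < l (2*k) := by
  by_contra hcon
  push_neg at hcon
  obtain ⟨N, hN⟩ := hzero
  have hb : ∀ k, a ≤ k → k < a + N + 1 → ¬ l (2*k+1) < l (2*k) := by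
    intro k hk _
    exact not_lt.mpr (hcon k hk)
  have hO := fwd_odd hpart hspec ha hodd hb (a + N) (by omega) (by omega)
  have h0 : l (2*(a+N)) = 0 := hN _ (by omega)
  omega

lemma fI_spec {l : ℕ → ℕ} (hpart : IsPartition l) (hspec : IsSpecial l)
    (hzero : EventuallyZero l) {j : ℕ} (hj : j ∈ PplusO l) :
    fI l j ∈ PminusO l ∧ gI l (fI l j) = j := by
  obtain ⟨hjodd, hlodd, hcond⟩ := hj
  obtain ⟨c, hc⟩ := hjodd
  set a := c + 1 with hadef
  have hja : j = 2*a - 1 := by omega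
  have ha : 1 ≤ a := by omega
  have haj : (j+1)/2 = a := by omega
  have hodd2a : l (2*a) % 2 = 1 := by
    have h := hspec a ha
    have h' : l (2*a-1) % 2 = 1 := by rw [← hja]; exact Nat.odd_iff.mp hlodd
    omega
  have hfj : fI l j = 2 * sInf {k | a ≤ k ∧ l (2*k+1) < l (2*k)} := by
    unfold fI; simp only [haj]
  set S : Set ℕ := {k | a ≤ k ∧ l (2*k+1) < l (2*k)} with hS
  have hSne : S.Nonempty := by
    obtain ⟨k, hk1, hk2⟩ := drop_exists hpart hspec hzero ha hodd2a
    exact ⟨k, hk1, hk2⟩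
  set b := sInf S with hbdef
  have hbS : b ∈ S := Nat.sInf_mem hSne
  have hab : a ≤ b := hbS.1
  have hdrop : l (2*b+1) < l (2*b) := hbS.2
  have hnotlt : ∀ k, a ≤ k → k < b → ¬ l (2*k+1) < l (2*k) := by
    intro k hk hkb hlt
    exact Nat.notMem_of_lt_sInf hkb ⟨hk, hlt⟩
  have hoddb : l (2*b) % 2 = 1 := fwd_odd hpart hspec ha hodd2a hnotlt b hab le_rfl
  have hfj2 : fI l j = 2*b := hfj
  constructor
  · rw [hfj2]
    refine ⟨by omega, ⟨b, by ring⟩, Nat.odd_iff.mpr hoddb, hdrop⟩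
  · rw [hfj2]
    set T : Set ℕ := {k | k ≤ b ∧ (k = 1 ∨ l (2*k-1) < l (2*k-2))} with hT
    have hgj : gI l (2*b) = 2 * sSup T - 1 := by
      unfold gI; simp only [show 2*b/2 = b by omega]; rfl
    have haT : a ∈ T := by
      refine ⟨hab, ?_⟩
      rcases hcond with h | h
      · left; omega
      · right
        have e : j - 1 = 2*a - 2 := by omega
        rw [e, hja] at h
        exact h
    have hub : ∀ k ∈ T, k ≤ a := by
      intro k hk
      by_contra hka
      push_neg at hka
      have hkb : k ≤ b := hk.1
      have hk2 : l (2*k-1) < l (2*k-2) := by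
        rcases hk.2 with h | h
        · omega
        · exact h
      have hnl := hnotlt (k-1) (by omega) (by omega)
      rw [show 2*(k-1)+1 = 2*k-1 by omega, show 2*(k-1) = 2*k-2 by omega] at hnl
      exact hnl hk2
    have hTbdd : BddAbove T := ⟨b, fun k hk => hk.1⟩
    have hsup : sSup T = a :=
      le_antisymm (hub _ (Nat.sSup_mem ⟨a, haT⟩ hTbdd)) (le_csSup hTbdd haT)
    rw [hgj, hsup]
    omega

lemma gI_spec {l : ℕ → ℕ} (hpart : IsPartition l) (hspec : IsSpecial l)
    {j : ℕ} (hj : j ∈ PminusO l) :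
    gI l j ∈ PplusO l ∧ fI l (gI l j) = j := by
  obtain ⟨hj2, hjeven, hlodd, hdropj⟩ := hj
  obtain ⟨b, hb⟩ := hjeven
  have hjb : j = 2*b := by omega
  have hb1 : 1 ≤ b := by omega
  have hjdiv : j/2 = b := by omega
  have hoddb : l (2*b) % 2 = 1 := by rw [← hjb]; exact Nat.odd_iff.mp hlodd
  have hdropb : l (2*b+1) < l (2*b) := by rw [← hjb]; exact hdropj
  set T : Set ℕ := {k | k ≤ b ∧ (k = 1 ∨ l (2*k-1) < l (2*k-2))} with hT
  have h1T : (1:ℕ) ∈ T := ⟨hb1, Or.inl rfl⟩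
  have hTbdd : BddAbove T := ⟨b, fun k hk => hk.1⟩
  set a := sSup T with hadef
  have haT : a ∈ T := Nat.sSup_mem ⟨1, h1T⟩ hTbdd
  have ha1 : 1 ≤ a := le_csSup hTbdd h1T
  have hab : a ≤ b := haT.1
  have heq : ∀ k, a ≤ k → k < b → l (2*k) = l (2*k+1) := by
    intro k hk hkb
    have hp := hpart (2*k) (by omega)
    by_contra hne
    have hlt : l (2*k+1) < l (2*k) := by omega
    have hmem : k+1 ∈ T := by
      refine ⟨by omega, Or.inr ?_⟩
      rw [show 2*(k+1)-1 = 2*k+1 by omega, show 2*(k+1)-2 = 2*k by omega]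
      exact hlt
    have := le_csSup hTbdd hmem
    omega
  have hodda : l (2*a) % 2 = 1 := bwd_odd hspec ha1 hoddb heq a le_rfl hab
  have hodda1 : l (2*a-1) % 2 = 1 := by
    have h := hspec a ha1
    omega
  have hgj : gI l j = 2*a - 1 := by
    unfold gI; simp only [hjdiv]; rfl
  constructor
  · rw [hgj]
    refine ⟨⟨a-1, by omega⟩, Nat.odd_iff.mpr hodda1, ?_⟩
    rcases haT.2 with h | h
    · left; omega
    · right
      rw [show 2*a-1-1 = 2*a-2 by omega]
      exact h
  · rw [hgj]
    have hfj : fI l (2*a-1) = 2 * sInf {k | a ≤ k ∧ l (2*k+1) < l (2*k)} := by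
      unfold fI; simp only [show (2*a-1+1)/2 = a by omega]
    set S : Set ℕ := {k | a ≤ k ∧ l (2*k+1) < l (2*k)} with hS
    have hbS : b ∈ S := ⟨hab, hdropb⟩
    have hlb : ∀ k ∈ S, b ≤ k := by
      intro k hk
      by_contra hkb
      push_neg at hkb
      have := heq k hk.1 hkb
      have := hk.2
      omega
    have hinf : sInf S = b :=
      le_antisymm (Nat.sInf_le hbS) (hlb _ (Nat.sInf_mem ⟨b, hbS⟩))
    rw [hfj, hinf]
    omega

/-- for a special orthogonal partition of `2m`,
`|P^+(λ)| = |P^-(λ)|`. -/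
theorem PplusO_card_eq_PminusO_card (m : ℕ) (l : ℕ → ℕ) (hpart : IsPartition l)
    (hzero : EventuallyZero l) (hsum : psum l = 2 * m)
    (horth : IsOrthogonal l) (hspec : IsSpecial l) :
    (PplusO l).ncard = (PminusO l).ncard := by
  have h1 : ∀ j ∈ PplusO l, fI l j ∈ PminusO l ∧ gI l (fI l j) = j :=
    fun j hj => fI_spec hpart hspec hzero hj
  have h2 : ∀ j ∈ PminusO l, gI l j ∈ PplusO l ∧ fI l (gI l j) = j :=
    fun j hj => gI_spec hpart hspec hj
  have hbij : Set.BijOn (fI l) (PplusO l) (PminusO l) := by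
    refine Set.InvOn.bijOn ⟨?_, ?_⟩ (fun j hj => (h1 j hj).1) (fun j hj => (h2 j hj).1)
    · intro j hj; exact (h1 j hj).2
    · intro j hj; exact (h2 j hj).2
  calc (PplusO l).ncard = (fI l '' PplusO l).ncard :=
        (Set.ncard_image_of_injOn hbij.injOn).symm
    _ = (PminusO l).ncard := by rw [hbij.image_eq]
end
end
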